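/- arXiv:2306.00468 — 14 statements merged into one kernel-verified Lean document; each statement's English description precedes it below -/
import Mathlib

section
/- For every quintuple P of positive rationals and every element g of the group G (i.e., every finite composition of the maps α, β, α⁻¹, β⁻¹), one has T(g(P)) = T(P). In particular T(α(a,b,c,d,e)) = T(a,b,c,d,e) and T(β(a,b,c,d,e)) = T(a,b,c,d,e) for all positive rationals a,b,c,d,e. -/
abbrev Q5 := ℚ × ℚ × ℚ × ℚ × ℚ

/-- α(a,b,c,d,e) = (b, (b²+cd)/a, c, d, e) -/
def actAlpha : Q5 → Q5
  | (a, b, c, d, e) => (b, (b ^ 2 + c * d) / a, c, d, e)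

/-- β(a,b,c,d,e) = (b, c, (ac+be)/d, a, e) -/
def actBeta : Q5 → Q5
  | (a, b, c, d, e) => (b, c, (a * c + b * e) / d, a, e)

/-- α⁻¹(a,b,c,d,e) = ((a²+cd)/b, a, c, d, e) -/
def actAlphaInv : Q5 → Q5
  | (a, b, c, d, e) => ((a ^ 2 + c * d) / b, a, c, d, e)

/-- β⁻¹(a,b,c,d,e) = (d, a, b, (ae+bd)/c, e) -/
def actBetaInv : Q5 → Q5
  | (a, b, c, d, e) => (d, a, b, (a * e + b * d) / c, e)

/-- Generators of the group G. -/
inductive Gen | A | B | Ainv | Binv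

def Gen.app : Gen → Q5 → Q5
  | .A => actAlpha
  | .B => actBeta
  | .Ainv => actAlphaInv
  | .Binv => actBetaInv

/-- An element of G, given as a word in the generators, applied to a quintuple. -/
def applyWord (w : List Gen) (P : Q5) : Q5 := w.foldl (fun Q g => g.app Q) P

def Pos5 : Q5 → Prop
  | (a, b, c, d, e) => 0 < a ∧ 0 < b ∧ 0 < c ∧ 0 < d ∧ 0 < e
def T : Q5 → ℚ
  | (a, b, c, d, e) =>
      (a * b * (c ^ 2 + d ^ 2 + e ^ 2) + (a ^ 2 + b ^ 2 + c * d) * (c + d) * e) /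
        (a * b * c * d) - 9

lemma T_alpha (a b c d e : ℚ) (ha : 0 < a) (hb : 0 < b) (hc : 0 < c) (hd : 0 < d)
    (he : 0 < e) : T (actAlpha (a,b,c,d,e)) = T (a,b,c,d,e) := by
  simp only [actAlpha, T]
  rw [sub_left_inj]
  field_simp
  ring

lemma T_beta (a b c d e : ℚ) (ha : 0 < a) (hb : 0 < b) (hc : 0 < c) (hd : 0 < d)
    (he : 0 < e) : T (actBeta (a,b,c,d,e)) = T (a,b,c,d,e) := by
  simp only [actBeta, T]
  rw [sub_left_inj]
  field_simp
  ring

lemma T_alphaInv (a b c d e : ℚ) (ha : 0 < a) (hb : 0 < b) (hc : 0 < c) (hd : 0 < d)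
    (he : 0 < e) : T (actAlphaInv (a,b,c,d,e)) = T (a,b,c,d,e) := by
  simp only [actAlphaInv, T]
  rw [sub_left_inj]
  field_simp
  ring

lemma T_betaInv (a b c d e : ℚ) (ha : 0 < a) (hb : 0 < b) (hc : 0 < c) (hd : 0 < d)
    (he : 0 < e) : T (actBetaInv (a,b,c,d,e)) = T (a,b,c,d,e) := by
  simp only [actBetaInv, T]
  rw [sub_left_inj]
  field_simp
  ring

lemma Pos5_gen (g : Gen) (P : Q5) (h : Pos5 P) : Pos5 (g.app P) := by
  obtain ⟨a, b, c, d, e⟩ := P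
  obtain ⟨ha, hb, hc, hd, he⟩ := h
  cases g <;>
    simp only [Gen.app, actAlpha, actBeta, actAlphaInv, actBetaInv, Pos5] <;>
    refine ⟨by positivity, by positivity, by positivity, by positivity, by positivity⟩

lemma T_gen (g : Gen) (P : Q5) (h : Pos5 P) : T (g.app P) = T P := by
  obtain ⟨a, b, c, d, e⟩ := P
  obtain ⟨ha, hb, hc, hd, he⟩ := h
  cases g
  · exact T_alpha a b c d e ha hb hc hd he
  · exact T_beta a b c d e ha hb hc hd he
  · exact T_alphaInv a b c d e ha hb hc hd he
  · exact T_betaInv a b c d e ha hb hc hd he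

/-- T is invariant under every element of G; in particular under α and β. -/
theorem T_invariant_under_G :
    (∀ P : Q5, Pos5 P → ∀ w : List Gen, T (applyWord w P) = T P) ∧
    (∀ a b c d e : ℚ, 0 < a → 0 < b → 0 < c → 0 < d → 0 < e →
      T (actAlpha (a, b, c, d, e)) = T (a, b, c, d, e) ∧
      T (actBeta (a, b, c, d, e)) = T (a, b, c, d, e)) := by
  constructor
  · intro P hP w
    induction w generalizing P with
    | nil => rfl
    | cons g w ih =>
        have : applyWord (g :: w) P = applyWord w (g.app P) := rfl
        rw [this, ih (g.app P) (Pos5_gen g P hP), T_gen g P hP]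
  · intro a b c d e ha hb hc hd he
    exact ⟨T_alpha a b c d e ha hb hc hd he, T_beta a b c d e ha hb hc hd he⟩
end

section
/- Fix a positive integer ε. For every element g of the group G (i.e., every finite composition of the maps α, β, α⁻¹, β⁻¹), each of the five components of g(ε,ε,ε,ε,ε) is a positive integer divisible by ε. -/
/-- `q` is a positive integer divisible by `ε` (i.e. `q = ε·k` for a positive natural `k`). -/
def IsPosMultOf (ε : ℕ) (q : ℚ) : Prop := ∃ k : ℕ, 0 < k ∧ q = ((ε * k : ℕ) : ℚ)


/-! ### Auxiliary development -/

/-- The integral invariant on quadruples (the fifth coordinate stays 1). -/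
def Inv4 (a b c d : ℕ) : Prop :=
  0 < a ∧ 0 < b ∧ 0 < c ∧ 0 < d ∧
  Nat.Coprime a b ∧ Nat.Coprime a c ∧ Nat.Coprime a d ∧
  Nat.Coprime b c ∧ Nat.Coprime b d ∧ Nat.Coprime c d ∧
  a ∣ b ^ 2 + c * d ∧ b ∣ a ^ 2 + c * d ∧ d ∣ a * c + b ∧ c ∣ a + b * d

lemma cop_helper {b B x : ℕ} (hx : Nat.Coprime b x) (h : Nat.gcd b B ∣ x) :
    Nat.Coprime b B :=
  Nat.dvd_one.mp (hx ▸ Nat.dvd_gcd (Nat.gcd_dvd_left _ _) h)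

lemma dvd_of_dvd_add {g x y : ℕ} (h : g ∣ x + y) (hx : g ∣ x) : g ∣ y := by
  simpa using Nat.dvd_sub h hx

lemma inv_tau {a b c d : ℕ} (h : Inv4 a b c d) : Inv4 b a d c := by
  obtain ⟨ha, hb, hc, hd, cab, cac, cad, cbc, cbd, ccd, h1, h2, h3, h4⟩ := h
  refine ⟨hb, ha, hd, hc, cab.symm, cbd, cbc, cad, cac, ccd.symm, ?_, ?_, ?_, ?_⟩
  · simpa [mul_comm] using h2
  · simpa [mul_comm] using h1
  · simpa [mul_comm, add_comm] using h4
  · simpa [mul_comm, add_comm] using h3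

lemma stepA {a b c d B : ℕ} (h : Inv4 a b c d) (hB : a * B = b ^ 2 + c * d) :
    Inv4 b B c d := by
  obtain ⟨ha, hb, hc, hd, cab, cac, cad, cbc, cbd, ccd, h1, h2, h3, h4⟩ := h
  have hpos : 0 < a * B := by rw [hB]; positivity
  have hBpos : 0 < B := Nat.pos_of_ne_zero (by rintro rfl; simp at hpos)
  obtain ⟨j, hj⟩ := h2
  obtain ⟨k, hk⟩ := h3
  obtain ⟨l, hl⟩ := h4
  have hBZ : (a : ℤ) * B = (b : ℤ) ^ 2 + c * d := by exact_mod_cast hB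
  have hjZ : (a : ℤ) ^ 2 + c * d = b * j := by exact_mod_cast hj
  have hkZ : (a : ℤ) * c + b = d * k := by exact_mod_cast hk
  have hlZ : (a : ℤ) + b * d = c * l := by exact_mod_cast hl
  have hsum : ∀ g : ℕ, g ∣ B → g ∣ b ^ 2 + c * d := fun g hg => hB ▸ hg.mul_left a
  refine ⟨hb, hBpos, hc, hd, ?_, cbc, cbd, ?_, ?_, ccd, ?_, ⟨a, by rw [mul_comm B a, hB]⟩, ?_, ?_⟩
  · -- Coprime b B
    refine cop_helper (Nat.Coprime.mul_right cbc cbd) ?_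
    exact dvd_of_dvd_add (hsum _ (Nat.gcd_dvd_right b B))
      ((Nat.gcd_dvd_left b B).trans (dvd_pow_self b two_ne_zero))
  · -- Coprime B c
    refine (cop_helper (cbc.symm.pow_right 2) ?_).symm
    have h1' : Nat.gcd c B ∣ c * d + b ^ 2 := by
      rw [add_comm]; exact hsum _ (Nat.gcd_dvd_right c B)
    exact dvd_of_dvd_add h1' ((Nat.gcd_dvd_left c B).mul_right d)
  · -- Coprime B d
    refine (cop_helper (cbd.symm.pow_right 2) ?_).symm
    have h1' : Nat.gcd d B ∣ c * d + b ^ 2 := by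
      rw [add_comm]; exact hsum _ (Nat.gcd_dvd_right d B)
    exact dvd_of_dvd_add h1' ((Nat.gcd_dvd_left d B).mul_left c)
  · -- b ∣ B ^ 2 + c * d
    have e1 : (a : ℤ) ^ 2 * ((B : ℤ) ^ 2 + c * d)
        = b * (b ^ 3 + 2 * b * (c * d) + j * (c * d)) := by
      linear_combination ((a : ℤ) * B + b ^ 2 + c * d) * hBZ + (c * d) * hjZ
    have key2 : (b : ℤ) ∣ (a : ℤ) ^ 2 * ((B : ℤ) ^ 2 + c * d) := ⟨_, e1⟩
    have key : b ∣ a ^ 2 * (B ^ 2 + c * d) := by exact_mod_cast key2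
    exact (cab.symm.pow_right 2).dvd_of_dvd_mul_left key
  · -- d ∣ b * c + B
    have e1 : (a : ℤ) * ((b : ℤ) * c + B) = d * (b * k + c) := by
      linear_combination hBZ + (b : ℤ) * hkZ
    have key2 : (d : ℤ) ∣ (a : ℤ) * ((b : ℤ) * c + B) := ⟨_, e1⟩
    have key : d ∣ a * (b * c + B) := by exact_mod_cast key2
    exact cad.symm.dvd_of_dvd_mul_left key
  · -- c ∣ b + B * d
    have e1 : (a : ℤ) * ((b : ℤ) + B * d) = c * (b * l + d ^ 2) := by
      linear_combination (d : ℤ) * hBZ + (b : ℤ) * hlZ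
    have key2 : (c : ℤ) ∣ (a : ℤ) * ((b : ℤ) + B * d) := ⟨_, e1⟩
    have key : c ∣ a * (b + B * d) := by exact_mod_cast key2
    exact cac.symm.dvd_of_dvd_mul_left key

lemma stepB {a b c d C : ℕ} (h : Inv4 a b c d) (hC : d * C = a * c + b) :
    Inv4 b c C a := by
  obtain ⟨ha, hb, hc, hd, cab, cac, cad, cbc, cbd, ccd, h1, h2, h3, h4⟩ := h
  have hpos : 0 < d * C := by rw [hC]; positivity
  have hCpos : 0 < C := Nat.pos_of_ne_zero (by rintro rfl; simp at hpos)
  obtain ⟨i, hi⟩ := h1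
  obtain ⟨j, hj⟩ := h2
  obtain ⟨l, hl⟩ := h4
  have hCZ : (d : ℤ) * C = (a : ℤ) * c + b := by exact_mod_cast hC
  have hiZ : (b : ℤ) ^ 2 + c * d = a * i := by exact_mod_cast hi
  have hjZ : (a : ℤ) ^ 2 + c * d = b * j := by exact_mod_cast hj
  have hlZ : (a : ℤ) + b * d = c * l := by exact_mod_cast hl
  have hsum : ∀ g : ℕ, g ∣ C → g ∣ a * c + b := fun g hg => hC ▸ hg.mul_left d
  refine ⟨hb, hc, hCpos, ha, cbc, ?_, cab.symm, ?_, cac.symm, ?_, ?_, ?_, ?_,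
    ⟨d, by rw [mul_comm C d, hC]; ring⟩⟩
  · -- Coprime b C
    refine cop_helper (Nat.Coprime.mul_right cab.symm cbc) ?_
    exact dvd_of_dvd_add (by rw [add_comm]; exact hsum _ (Nat.gcd_dvd_right b C))
      (Nat.gcd_dvd_left b C)
  · -- Coprime c C
    refine cop_helper cbc.symm ?_
    exact dvd_of_dvd_add (hsum _ (Nat.gcd_dvd_right c C))
      ((Nat.gcd_dvd_left c C).mul_left a)
  · -- Coprime C a
    refine (cop_helper cab ?_).symm
    exact dvd_of_dvd_add (hsum _ (Nat.gcd_dvd_right a C))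
      ((Nat.gcd_dvd_left a C).mul_right c)
  · -- b ∣ c ^ 2 + C * a
    have e1 : (d : ℤ) * ((c : ℤ) ^ 2 + C * a) = b * (c * j + a) := by
      linear_combination (c : ℤ) * hjZ + (a : ℤ) * hCZ
    have key2 : (b : ℤ) ∣ (d : ℤ) * ((c : ℤ) ^ 2 + C * a) := ⟨_, e1⟩
    have key : b ∣ d * (c ^ 2 + C * a) := by exact_mod_cast key2
    exact cbd.dvd_of_dvd_mul_left key
  · -- c ∣ b ^ 2 + C * a
    have e1 : (d : ℤ) * ((b : ℤ) ^ 2 + C * a) = c * (b * l + a ^ 2) := by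
      linear_combination (b : ℤ) * hlZ + (a : ℤ) * hCZ
    have key2 : (c : ℤ) ∣ (d : ℤ) * ((b : ℤ) ^ 2 + C * a) := ⟨_, e1⟩
    have key : c ∣ d * (b ^ 2 + C * a) := by exact_mod_cast key2
    exact ccd.dvd_of_dvd_mul_left key
  · -- a ∣ b * C + c
    have e1 : (d : ℤ) * ((b : ℤ) * C + c) = a * (b * c + i) := by
      linear_combination (b : ℤ) * hCZ + hiZ
    have key2 : (a : ℤ) ∣ (d : ℤ) * ((b : ℤ) * C + c) := ⟨_, e1⟩
    have key : a ∣ d * (b * C + c) := by exact_mod_cast key2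
    exact cad.dvd_of_dvd_mul_left key

/-- The rational-level invariant. -/
def QInv (P : Q5) : Prop :=
  ∃ a b c d : ℕ, Inv4 a b c d ∧ P = ((a : ℚ), (b : ℚ), (c : ℚ), (d : ℚ), (1 : ℚ))

lemma qinv_step (g : Gen) {P : Q5} (h : QInv P) : QInv (g.app P) := by
  obtain ⟨a, b, c, d, hInv, rfl⟩ := h
  have ha0 : ((a : ℚ)) ≠ 0 := Nat.cast_ne_zero.mpr hInv.1.ne'
  have hb0 : ((b : ℚ)) ≠ 0 := Nat.cast_ne_zero.mpr hInv.2.1.ne'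
  have hc0 : ((c : ℚ)) ≠ 0 := Nat.cast_ne_zero.mpr hInv.2.2.1.ne'
  have hd0 : ((d : ℚ)) ≠ 0 := Nat.cast_ne_zero.mpr hInv.2.2.2.1.ne'
  cases g with
  | A =>
    set B := (b ^ 2 + c * d) / a with hBdef
    have hdvd : a ∣ b ^ 2 + c * d := hInv.2.2.2.2.2.2.2.2.2.2.1
    have hB : a * B = b ^ 2 + c * d := Nat.mul_div_cancel' hdvd
    refine ⟨b, B, c, d, stepA hInv hB, ?_⟩
    have hBZ : (a : ℚ) * B = (b : ℚ) ^ 2 + c * d := by exact_mod_cast hB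
    simp only [Gen.app, actAlpha]
    refine Prod.ext rfl (Prod.ext ?_ rfl)
    field_simp
    linarith [hBZ]
  | Ainv =>
    have hInv' := inv_tau hInv
    have hdvd : b ∣ a ^ 2 + d * c := by
      have := hInv.2.2.2.2.2.2.2.2.2.2.2.1
      rwa [mul_comm] at this
    set A := (a ^ 2 + d * c) / b with hAdef
    have hA : b * A = a ^ 2 + d * c := Nat.mul_div_cancel' hdvd
    refine ⟨A, a, c, d, inv_tau (stepA hInv' hA), ?_⟩
    have hAZ : (b : ℚ) * A = (a : ℚ) ^ 2 + d * c := by exact_mod_cast hA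
    simp only [Gen.app, actAlphaInv]
    refine Prod.ext ?_ rfl
    field_simp
    linarith [hAZ]
  | B =>
    have hdvd : d ∣ a * c + b := hInv.2.2.2.2.2.2.2.2.2.2.2.2.1
    set C := (a * c + b) / d with hCdef
    have hC : d * C = a * c + b := Nat.mul_div_cancel' hdvd
    refine ⟨b, c, C, a, stepB hInv hC, ?_⟩
    have hCZ : (d : ℚ) * C = (a : ℚ) * c + b := by exact_mod_cast hC
    simp only [Gen.app, actBeta]
    refine Prod.ext rfl (Prod.ext rfl (Prod.ext ?_ rfl))
    field_simp
    linarith [hCZ]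
  | Binv =>
    have hInv' := inv_tau hInv
    have hdvd : c ∣ b * d + a := by
      have := hInv.2.2.2.2.2.2.2.2.2.2.2.2.2
      rwa [add_comm] at this
    set D := (b * d + a) / c with hDdef
    have hD : c * D = b * d + a := Nat.mul_div_cancel' hdvd
    refine ⟨d, a, b, D, inv_tau (stepB hInv' hD), ?_⟩
    have hDZ : (c : ℚ) * D = (b : ℚ) * d + a := by exact_mod_cast hD
    simp only [Gen.app, actBetaInv]
    refine Prod.ext rfl (Prod.ext rfl (Prod.ext rfl (Prod.ext ?_ rfl)))
    field_simp
    linarith [hDZ]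

lemma qinv_word (w : List Gen) {P : Q5} (h : QInv P) : QInv (applyWord w P) := by
  induction w generalizing P with
  | nil => exact h
  | cons g w ih =>
    have : applyWord (g :: w) P = applyWord w (g.app P) := rfl
    rw [this]
    exact ih (qinv_step g h)

/-- Componentwise scaling. -/
def smul5 (t : ℚ) (P : Q5) : Q5 :=
  (t * P.1, t * P.2.1, t * P.2.2.1, t * P.2.2.2.1, t * P.2.2.2.2)

lemma gen_smul (g : Gen) (t : ℚ) (ht : t ≠ 0) (P : Q5) :
    g.app (smul5 t P) = smul5 t (g.app P) := by
  obtain ⟨a, b, c, d, e⟩ := P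
  cases g with
  | A =>
    simp only [Gen.app, actAlpha, smul5]
    refine Prod.ext rfl (Prod.ext ?_ rfl)
    rcases eq_or_ne a 0 with h | h
    · simp [h]
    · field_simp
  | B =>
    simp only [Gen.app, actBeta, smul5]
    refine Prod.ext rfl (Prod.ext rfl (Prod.ext ?_ rfl))
    rcases eq_or_ne d 0 with h | h
    · simp [h]
    · field_simp
  | Ainv =>
    simp only [Gen.app, actAlphaInv, smul5]
    refine Prod.ext ?_ rfl
    rcases eq_or_ne b 0 with h | h
    · simp [h]
    · field_simp
  | Binv =>
    simp only [Gen.app, actBetaInv, smul5]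
    refine Prod.ext rfl (Prod.ext rfl (Prod.ext rfl (Prod.ext ?_ rfl)))
    rcases eq_or_ne c 0 with h | h
    · simp [h]
    · field_simp

lemma word_smul (w : List Gen) (t : ℚ) (ht : t ≠ 0) (P : Q5) :
    applyWord w (smul5 t P) = smul5 t (applyWord w P) := by
  induction w generalizing P with
  | nil => rfl
  | cons g w ih =>
    have h1 : applyWord (g :: w) (smul5 t P) = applyWord w (g.app (smul5 t P)) := rfl
    have h2 : applyWord (g :: w) P = applyWord w (g.app P) := rfl
    rw [h1, h2, gen_smul g t ht, ih]

/-- every component of g(ε,ε,ε,ε,ε) is a positive integer divisible by ε. -/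
theorem components_of_orbit_are_multiples (ε : ℕ) (hε : 0 < ε) (w : List Gen) :
    IsPosMultOf ε (applyWord w ((ε : ℚ), (ε : ℚ), (ε : ℚ), (ε : ℚ), (ε : ℚ))).1 ∧
    IsPosMultOf ε (applyWord w ((ε : ℚ), (ε : ℚ), (ε : ℚ), (ε : ℚ), (ε : ℚ))).2.1 ∧
    IsPosMultOf ε (applyWord w ((ε : ℚ), (ε : ℚ), (ε : ℚ), (ε : ℚ), (ε : ℚ))).2.2.1 ∧
    IsPosMultOf ε (applyWord w ((ε : ℚ), (ε : ℚ), (ε : ℚ), (ε : ℚ), (ε : ℚ))).2.2.2.1 ∧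
    IsPosMultOf ε (applyWord w ((ε : ℚ), (ε : ℚ), (ε : ℚ), (ε : ℚ), (ε : ℚ))).2.2.2.2 := by
  have ht : ((ε : ℚ)) ≠ 0 := Nat.cast_ne_zero.mpr hε.ne'
  have hstart : ((ε : ℚ), (ε : ℚ), (ε : ℚ), (ε : ℚ), (ε : ℚ))
      = smul5 (ε : ℚ) ((1 : ℚ), (1 : ℚ), (1 : ℚ), (1 : ℚ), (1 : ℚ)) := by
    simp [smul5]
  have hones : QInv ((1 : ℚ), (1 : ℚ), (1 : ℚ), (1 : ℚ), (1 : ℚ)) := by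
    refine ⟨1, 1, 1, 1, ?_, by norm_num⟩
    refine ⟨one_pos, one_pos, one_pos, one_pos, ?_, ?_, ?_, ?_, ?_, ?_, ?_, ?_, ?_, ?_⟩ <;>
      simp [Nat.Coprime]
  obtain ⟨a, b, c, d, hInv, hEq⟩ := qinv_word w hones
  rw [hstart, word_smul w (ε : ℚ) ht, hEq]
  simp only [smul5, IsPosMultOf]
  refine ⟨⟨a, hInv.1, by push_cast; ring⟩, ⟨b, hInv.2.1, by push_cast; ring⟩,
    ⟨c, hInv.2.2.1, by push_cast; ring⟩, ⟨d, hInv.2.2.2.1, by push_cast; ring⟩,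
    ⟨1, one_pos, by push_cast; ring⟩⟩
end

section
/- For every quintuple P = (a,b,c,d,e) of positive rationals, T(P) = T̃(φ(P)); that is, writing φ(P) = (C₀,C₁,C₂), one has T(a,b,c,d,e) = C₀C₁C₂ − C₀² − C₁² − C₂² − 7. -/
def phiC0 : Q5 → ℚ
  | (a, b, c, d, _) => (a ^ 2 + b ^ 2 + c * d) / (a * b)

def phiC1 : Q5 → ℚ
  | (a, b, c, d, e) => (c ^ 2 * d + a ^ 2 * c + b ^ 2 * d + a * b * e) / (b * c * d)

def phiC2 : Q5 → ℚ
  | (a, b, c, d, e) => (c * d ^ 2 + a ^ 2 * c + b ^ 2 * d + a * b * e) / (a * c * d)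

def phi (P : Q5) : ℚ × ℚ × ℚ := (phiC0 P, phiC1 P, phiC2 P)

def Ttilde (p : ℚ × ℚ × ℚ) : ℚ := p.1 * p.2.1 * p.2.2 - p.1 ^ 2 - p.2.1 ^ 2 - p.2.2 ^ 2 - 7

/-- T(P) = T̃(φ(P)) for every quintuple of positive rationals. -/
theorem T_eq_Ttilde_phi (a b c d e : ℚ)
    (ha : 0 < a) (hb : 0 < b) (hc : 0 < c) (hd : 0 < d) (he : 0 < e) :
    T (a, b, c, d, e) = Ttilde (phi (a, b, c, d, e)) ∧
    T (a, b, c, d, e) =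
      phiC0 (a, b, c, d, e) * phiC1 (a, b, c, d, e) * phiC2 (a, b, c, d, e) -
        phiC0 (a, b, c, d, e) ^ 2 - phiC1 (a, b, c, d, e) ^ 2 - phiC2 (a, b, c, d, e) ^ 2 - 7 := by
  have h2 : T (a, b, c, d, e) =
      phiC0 (a, b, c, d, e) * phiC1 (a, b, c, d, e) * phiC2 (a, b, c, d, e) -
        phiC0 (a, b, c, d, e) ^ 2 - phiC1 (a, b, c, d, e) ^ 2 - phiC2 (a, b, c, d, e) ^ 2 - 7 := by
    simp only [T, phiC0, phiC1, phiC2]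
    field_simp
    ring
  exact ⟨h2, h2⟩
end

section
/- For every quintuple P of positive rationals, writing C₀, C₁, C₂ for the three component functions of φ: C₀(α(P)) = C₀(P), C₁(α(P)) = C₂(P), C₂(α(P)) = C₀(P)·C₂(P) − C₁(P), and C₀(β(P)) = C₁(P), C₁(β(P)) = C₂(P), C₂(β(P)) = C₀(P). Equivalently, φ(α(P)) = α̃(φ(P)) and φ(β(P)) = β̃(φ(P)). -/
abbrev Q3 := ℚ × ℚ × ℚ

/-- α̃(x,y,z) = (x, z, xz−y) -/
def tAlpha : Q3 → Q3
  | (x, y, z) => (x, z, x * z - y)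

/-- β̃(x,y,z) = (y, z, x) -/
def tBeta : Q3 → Q3
  | (x, y, z) => (y, z, x)

/-- α̃⁻¹(x,y,z) = (x, xy−z, y) -/
def tAlphaInv : Q3 → Q3
  | (x, y, z) => (x, x * y - z, y)

/-- β̃⁻¹(x,y,z) = (z, x, y) -/
def tBetaInv : Q3 → Q3
  | (x, y, z) => (z, x, y)

/-- Generators of the group G̃. -/
inductive TGen | A | B | Ainv | Binv

def TGen.app : TGen → Q3 → Q3
  | .A => tAlpha
  | .B => tBeta
  | .Ainv => tAlphaInv
  | .Binv => tBetaInv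

/-- An element of G̃, given as a word in the generators, applied to a triple. -/
def applyTWord (w : List TGen) (p : Q3) : Q3 := w.foldl (fun q g => g.app q) p
/-- the component functions of φ transform under α and β as stated;
equivalently φ∘α = α̃∘φ and φ∘β = β̃∘φ on positive quintuples. -/
theorem phi_compat_alpha_beta (P : Q5) (hP : Pos5 P) :
    phiC0 (actAlpha P) = phiC0 P ∧
    phiC1 (actAlpha P) = phiC2 P ∧
    phiC2 (actAlpha P) = phiC0 P * phiC2 P - phiC1 P ∧
    phiC0 (actBeta P) = phiC1 P ∧
    phiC1 (actBeta P) = phiC2 P ∧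
    phiC2 (actBeta P) = phiC0 P ∧
    phi (actAlpha P) = tAlpha (phi P) ∧
    phi (actBeta P) = tBeta (phi P) := by
  obtain ⟨a, b, c, d, e⟩ := P
  obtain ⟨ha, hb, hc, hd, he⟩ := hP
  have ha' := ha.ne'
  have hb' := hb.ne'
  have hc' := hc.ne'
  have hd' := hd.ne'
  have h1 : (0:ℚ) < b ^ 2 + c * d := by positivity
  have h2 : (0:ℚ) < a * c + b * e := by positivity
  have key1 : phiC0 (actAlpha (a,b,c,d,e)) = phiC0 (a,b,c,d,e) := by
    simp only [actAlpha, phiC0]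
    field_simp
    ring
  have key2 : phiC1 (actAlpha (a,b,c,d,e)) = phiC2 (a,b,c,d,e) := by
    simp only [actAlpha, phiC1, phiC2]
    field_simp
    ring
  have key3 : phiC2 (actAlpha (a,b,c,d,e)) = phiC0 (a,b,c,d,e) * phiC2 (a,b,c,d,e) - phiC1 (a,b,c,d,e) := by
    simp only [actAlpha, phiC0, phiC1, phiC2]
    field_simp
    ring
  have key4 : phiC0 (actBeta (a,b,c,d,e)) = phiC1 (a,b,c,d,e) := by
    simp only [actBeta, phiC0, phiC1]
    field_simp
    ring
  have key5 : phiC1 (actBeta (a,b,c,d,e)) = phiC2 (a,b,c,d,e) := by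
    simp only [actBeta, phiC1, phiC2]
    field_simp
    ring
  have key6 : phiC2 (actBeta (a,b,c,d,e)) = phiC0 (a,b,c,d,e) := by
    simp only [actBeta, phiC2, phiC0]
    field_simp
    ring
  refine ⟨key1, key2, key3, key4, key5, key6, ?_, ?_⟩
  · simp only [phi, tAlpha, key1, key2, key3]
  · simp only [phi, tBeta, key4, key5, key6]
end

section
/- The orbit G̃(3,4,4) equals the set of all triples (x,y,z) of positive integers satisfying T̃(x,y,z) = 0, i.e., satisfying xyz = x² + y² + z² + 7. In particular, a triple of positive integers satisfies xyz = x² + y² + z² + 7 if and only if it can be obtained from (3,4,4) by a finite composition of α̃, β̃, α̃⁻¹, β̃⁻¹. -/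
/-- The orbit of (3,4,4) under the group G̃ generated by α̃ and β̃. -/
def orbit344 : Set Q3 := {p | ∃ w : List TGen, applyTWord w (3, 4, 4) = p}

/-! ### Auxiliary definitions and lemmas -/

def IsSol (p : Q3) : Prop :=
  ∃ x y z : ℕ, 0 < x ∧ 0 < y ∧ 0 < z ∧
    p = ((x : ℚ), (y : ℚ), (z : ℚ)) ∧ x * y * z = x ^ 2 + y ^ 2 + z ^ 2 + 7

lemma sol_ge3 (a b c : ℤ) (ha : 1 ≤ a) (hb : 1 ≤ b) (hc : 1 ≤ c)
    (h : a * b * c = a ^ 2 + b ^ 2 + c ^ 2 + 7) : 3 ≤ a := by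
  by_contra hlt
  push_neg at hlt
  interval_cases a
  · nlinarith [sq_nonneg (b - c)]
  · nlinarith [sq_nonneg (b - c)]

lemma sol_lt (a b c : ℤ) (ha : 1 ≤ a) (hb : 1 ≤ b) (hc : 1 ≤ c)
    (h : a * b * c = a ^ 2 + b ^ 2 + c ^ 2 + 7) : c < a * b := by
  by_contra hge
  push_neg at hge
  nlinarith [mul_nonneg (by linarith : (0:ℤ) ≤ c) (by linarith : (0:ℤ) ≤ c - a * b)]

lemma descent_sorted (a b c : ℤ) (ha : 3 ≤ a) (hab : a ≤ b) (hbc : b ≤ c)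
    (h : a * b * c = a ^ 2 + b ^ 2 + c ^ 2 + 7)
    (hne : ¬(a = 3 ∧ b = 4 ∧ c = 4)) : a * b - c < c := by
  by_contra hge
  push_neg at hge
  have hcc : c * (a * b - c) = a ^ 2 + b ^ 2 + 7 := by linear_combination h
  have key : 0 ≤ (c - b) * ((a * b - c) - b) :=
    mul_nonneg (by linarith) (by linarith)
  have hfb : a * b ^ 2 ≤ a ^ 2 + 2 * b ^ 2 + 7 := by nlinarith
  have hb2 : b ^ 2 ≤ a ^ 2 + 7 := by nlinarith
  rcases eq_or_lt_of_le hab with rfl | hlt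
  · -- b = a
    have ha3 : a ≤ 3 := by nlinarith
    have haa : a = 3 := le_antisymm ha3 ha
    subst haa
    have hc4 : c ≤ 4 := by linarith
    interval_cases c <;> omega
  · -- a < b
    have h2a : 2 * a + 1 ≤ 7 := by nlinarith
    have ha3 : a = 3 := by omega
    subst ha3
    have hble : b ≤ 4 := by nlinarith
    have hb4 : b = 4 := by omega
    subst hb4
    have hc5 : c ≤ 5 := by nlinarith
    have hc4 : 4 ≤ c := by omega
    interval_cases c
    · exact hne ⟨rfl, rfl, rfl⟩
    · omega

lemma descent_gen (a b c : ℤ) (ha : 3 ≤ a) (hb : 3 ≤ b) (hac : a ≤ c) (hbc : b ≤ c)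
    (h : a * b * c = a ^ 2 + b ^ 2 + c ^ 2 + 7)
    (hne1 : ¬(a = 3 ∧ b = 4 ∧ c = 4)) (hne2 : ¬(a = 4 ∧ b = 3 ∧ c = 4)) :
    a * b - c < c := by
  rcases le_total a b with hab | hba
  · exact descent_sorted a b c ha hab hbc h hne1
  · have := descent_sorted b a c hb hba hac (by linear_combination h) (by tauto)
    linarith [mul_comm a b]

lemma applyTWord_append (w : List TGen) (g : TGen) (p : Q3) :
    applyTWord (w ++ [g]) p = g.app (applyTWord w p) := by
  simp [applyTWord, List.foldl_append]

lemma orbit_app (g : TGen) {p : Q3} (h : p ∈ orbit344) : g.app p ∈ orbit344 := by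
  obtain ⟨w, hw⟩ := h
  exact ⟨w ++ [g], by rw [applyTWord_append, hw]⟩

lemma step_sol (g : TGen) (p : Q3) (h : IsSol p) : IsSol (g.app p) := by
  obtain ⟨x, y, z, hx, hy, hz, rfl, heq⟩ := h
  have hZ : (x:ℤ) * y * z = (x:ℤ) ^ 2 + (y:ℤ) ^ 2 + (z:ℤ) ^ 2 + 7 := by exact_mod_cast heq
  cases g
  case A =>
    have hyz : y < x * z := by
      have h2 : y * y < y * (x * z) := by nlinarith
      exact Nat.lt_of_mul_lt_mul_left h2
    refine ⟨x, z, x * z - y, hx, hz, by omega, ?_, ?_⟩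
    · simp only [TGen.app, tAlpha]
      push_cast [Nat.cast_sub hyz.le]
      rfl
    · have hh : (x:ℤ) * z * ((x:ℤ) * z - y) = (x:ℤ) ^ 2 + (z:ℤ) ^ 2 + ((x:ℤ) * z - y) ^ 2 + 7 := by
        linear_combination hZ
      have hcast : ((x * z - y : ℕ) : ℤ) = (x:ℤ) * z - y := by
        push_cast [Nat.cast_sub hyz.le]; ring
      exact_mod_cast hcast ▸ hh
  case Ainv =>
    have hxy : z < x * y := by
      have h2 : z * z < z * (x * y) := by nlinarith
      exact Nat.lt_of_mul_lt_mul_left h2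
    refine ⟨x, x * y - z, y, hx, by omega, hy, ?_, ?_⟩
    · simp only [TGen.app, tAlphaInv]
      push_cast [Nat.cast_sub hxy.le]
      rfl
    · have hh : (x:ℤ) * ((x:ℤ) * y - z) * y = (x:ℤ) ^ 2 + ((x:ℤ) * y - z) ^ 2 + (y:ℤ) ^ 2 + 7 := by
        linear_combination hZ
      have hcast : ((x * y - z : ℕ) : ℤ) = (x:ℤ) * y - z := by
        push_cast [Nat.cast_sub hxy.le]; ring
      exact_mod_cast hcast ▸ hh
  case B =>
    exact ⟨y, z, x, hy, hz, hx, rfl, by rw [show y * z * x = x * y * z by ring, heq]; ring⟩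
  case Binv =>
    exact ⟨z, x, y, hz, hx, hy, rfl, by rw [show z * x * y = x * y * z by ring, heq]; ring⟩

lemma forward_sol (w : List TGen) : ∀ p, IsSol p → IsSol (applyTWord w p) := by
  induction w with
  | nil => intro p h; exact h
  | cons g w ih => intro p h; exact ih _ (step_sol g p h)

lemma reverse_sol (n : ℕ) : ∀ a b c : ℕ, a + b + c ≤ n → 0 < a → 0 < b → 0 < c →
    a * b * c = a ^ 2 + b ^ 2 + c ^ 2 + 7 → ((a:ℚ), (b:ℚ), (c:ℚ)) ∈ orbit344 := by
  induction n with
  | zero => intro a b c hs ha _ _ _; omega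
  | succ n ih =>
    intro a b c hs ha hb hc h
    have hZ : (a:ℤ) * b * c = (a:ℤ) ^ 2 + (b:ℤ) ^ 2 + (c:ℤ) ^ 2 + 7 := by exact_mod_cast h
    have ha1 : (1:ℤ) ≤ a := by exact_mod_cast ha
    have hb1 : (1:ℤ) ≤ b := by exact_mod_cast hb
    have hc1 : (1:ℤ) ≤ c := by exact_mod_cast hc
    have ha3 : (3:ℤ) ≤ a := sol_ge3 a b c ha1 hb1 hc1 hZ
    have hb3 : (3:ℤ) ≤ b := sol_ge3 b a c hb1 ha1 hc1 (by linear_combination hZ)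
    have hc3 : (3:ℤ) ≤ c := sol_ge3 c b a hc1 hb1 ha1 (by linear_combination hZ)
    by_cases hbase : (a = 3 ∧ b = 4 ∧ c = 4) ∨ (a = 4 ∧ b = 4 ∧ c = 3) ∨ (a = 4 ∧ b = 3 ∧ c = 4)
    · rcases hbase with ⟨rfl, rfl, rfl⟩ | ⟨rfl, rfl, rfl⟩ | ⟨rfl, rfl, rfl⟩
      · exact ⟨[], by norm_num [applyTWord]⟩
      · exact ⟨[.B], by norm_num [applyTWord, TGen.app, tBeta]⟩
      · exact ⟨[.B, .B], by norm_num [applyTWord, TGen.app, tBeta]⟩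
    · have hbase' : ¬(a = 3 ∧ b = 4 ∧ c = 4) ∧ ¬(a = 4 ∧ b = 4 ∧ c = 3) ∧
          ¬(a = 4 ∧ b = 3 ∧ c = 4) := by tauto
      obtain ⟨hn1, hn2, hn3⟩ := hbase'
      by_cases h1 : a ≤ c ∧ b ≤ c
      · -- c is maximal
        obtain ⟨h1a, h1b⟩ := h1
        have hlt : (a:ℤ) * b - c < c := by
          apply descent_gen a b c ha3 hb3 (by exact_mod_cast h1a) (by exact_mod_cast h1b) hZ
          · rintro ⟨u, v, w⟩
            exact hn1 ⟨by exact_mod_cast u, by exact_mod_cast v, by exact_mod_cast w⟩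
          · rintro ⟨u, v, w⟩
            exact hn3 ⟨by exact_mod_cast u, by exact_mod_cast v, by exact_mod_cast w⟩
        have hcab : c < a * b := by
          have := sol_lt a b c ha1 hb1 hc1 hZ; exact_mod_cast this
        set c' := a * b - c with hc'def
        have hc'cast : (c' : ℤ) = (a:ℤ) * b - c := by
          rw [hc'def]; push_cast [Nat.cast_sub hcab.le]; ring
        have hc'lt : c' < c := by
          have : (c':ℤ) < c := by rw [hc'cast]; exact hlt
          exact_mod_cast this
        have hc'pos : 0 < c' := by omega
        have hsolZ : (a:ℤ) * c' * b = (a:ℤ) ^ 2 + (c':ℤ) ^ 2 + (b:ℤ) ^ 2 + 7 := by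
          rw [hc'cast]; linear_combination hZ
        have hsol' : a * c' * b = a ^ 2 + c' ^ 2 + b ^ 2 + 7 := by exact_mod_cast hsolZ
        have hq := ih a c' b (by omega) ha hc'pos hb hsol'
        have happ := orbit_app .A hq
        have heq2 : TGen.app .A ((a:ℚ), (c':ℚ), (b:ℚ)) = ((a:ℚ), (b:ℚ), (c:ℚ)) := by
          simp only [TGen.app, tAlpha]
          have hcq : (c' : ℚ) = (a:ℚ) * b - c := by exact_mod_cast hc'cast
          rw [hcq]
          norm_num
        rwa [heq2] at happ
      · by_cases h2 : a ≤ b ∧ c ≤ b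
        · -- b is maximal
          obtain ⟨h2a, h2c⟩ := h2
          have hlt : (a:ℤ) * c - b < b := by
            apply descent_gen a c b ha3 hc3 (by exact_mod_cast h2a) (by exact_mod_cast h2c)
              (by linear_combination hZ)
            · rintro ⟨u, v, w⟩
              exact hn1 ⟨by exact_mod_cast u, by exact_mod_cast w, by exact_mod_cast v⟩
            · rintro ⟨u, v, w⟩
              exact hn2 ⟨by exact_mod_cast u, by exact_mod_cast w, by exact_mod_cast v⟩
          have hbac : b < a * c := by
            have := sol_lt a c b ha1 hc1 hb1 (by linear_combination hZ); exact_mod_cast this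
          set b' := a * c - b with hb'def
          have hb'cast : (b' : ℤ) = (a:ℤ) * c - b := by
            rw [hb'def]; push_cast [Nat.cast_sub hbac.le]; ring
          have hb'lt : b' < b := by
            have : (b':ℤ) < b := by rw [hb'cast]; exact hlt
            exact_mod_cast this
          have hb'pos : 0 < b' := by omega
          have hsolZ : (a:ℤ) * c * b' = (a:ℤ) ^ 2 + (c:ℤ) ^ 2 + (b':ℤ) ^ 2 + 7 := by
            rw [hb'cast]; linear_combination hZ
          have hsol' : a * c * b' = a ^ 2 + c ^ 2 + b' ^ 2 + 7 := by exact_mod_cast hsolZ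
          have hq := ih a c b' (by omega) ha hc hb'pos hsol'
          have happ := orbit_app .Ainv hq
          have heq2 : TGen.app .Ainv ((a:ℚ), (c:ℚ), (b':ℚ)) = ((a:ℚ), (b:ℚ), (c:ℚ)) := by
            simp only [TGen.app, tAlphaInv]
            have hbq : (b' : ℚ) = (a:ℚ) * c - b := by exact_mod_cast hb'cast
            rw [hbq]
            norm_num
          rwa [heq2] at happ
        · -- a is maximal
          have hmax : b ≤ a ∧ c ≤ a := by
            push_neg at h1 h2; omega
          obtain ⟨hba, hca⟩ := hmax
          have hlt : (c:ℤ) * b - a < a := by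
            apply descent_gen c b a hc3 hb3 (by exact_mod_cast hca) (by exact_mod_cast hba)
              (by linear_combination hZ)
            · rintro ⟨u, v, w⟩
              exact hn2 ⟨by exact_mod_cast w, by exact_mod_cast v, by exact_mod_cast u⟩
            · rintro ⟨u, v, w⟩
              exact hn3 ⟨by exact_mod_cast w, by exact_mod_cast v, by exact_mod_cast u⟩
          have hacb : a < c * b := by
            have := sol_lt c b a hc1 hb1 ha1 (by linear_combination hZ); exact_mod_cast this
          set a' := c * b - a with ha'def
          have ha'cast : (a' : ℤ) = (c:ℤ) * b - a := by
            rw [ha'def]; push_cast [Nat.cast_sub hacb.le]; ring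
          have ha'lt : a' < a := by
            have : (a':ℤ) < a := by rw [ha'cast]; exact hlt
            exact_mod_cast this
          have ha'pos : 0 < a' := by omega
          have hsolZ : (c:ℤ) * b * a' = (c:ℤ) ^ 2 + (b:ℤ) ^ 2 + (a':ℤ) ^ 2 + 7 := by
            rw [ha'cast]; linear_combination hZ
          have hsol' : c * b * a' = c ^ 2 + b ^ 2 + a' ^ 2 + 7 := by exact_mod_cast hsolZ
          have hq := ih c b a' (by omega) hc hb ha'pos hsol'
          have happ := orbit_app .B (orbit_app .Ainv hq)
          have heq2 : TGen.app .B (TGen.app .Ainv ((c:ℚ), (b:ℚ), (a':ℚ)))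
              = ((a:ℚ), (b:ℚ), (c:ℚ)) := by
            simp only [TGen.app, tAlphaInv, tBeta]
            have haq : (a' : ℚ) = (c:ℚ) * b - a := by exact_mod_cast ha'cast
            rw [haq]
            norm_num
          rwa [heq2] at happ

/-- the orbit G̃(3,4,4) is exactly the set of positive integer solutions
of xyz = x² + y² + z² + 7. -/
theorem orbit344_eq_solutions :
    orbit344 = {p : Q3 | ∃ x y z : ℕ, 0 < x ∧ 0 < y ∧ 0 < z ∧
      p = ((x : ℚ), (y : ℚ), (z : ℚ)) ∧ x * y * z = x ^ 2 + y ^ 2 + z ^ 2 + 7} := by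
  ext p
  constructor
  · rintro ⟨w, rfl⟩
    have hbase : IsSol ((3, 4, 4) : Q3) :=
      ⟨3, 4, 4, by norm_num, by norm_num, by norm_num, by norm_num, by norm_num⟩
    exact forward_sol w _ hbase
  · rintro ⟨x, y, z, hx, hy, hz, rfl, heq⟩
    exact reverse_sol (x + y + z) x y z le_rfl hx hy hz heq
end

section
/- Let x, y, z be positive integers with x ≤ y ≤ z and xyz = x² + y² + z² + 7. If y = z then (x,y,z) = (3,4,4), and if x = y then (x,y,z) = (4,4,13); in particular there is no solution with x = y = z. -/
/-- In the case x = y, there is no solution with x ≥ 6. -/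
lemma aux_xy_bound (x z : ℕ) (hx6 : 6 ≤ x) (hz : x ≤ z)
    (h : x * x * z = x ^ 2 + x ^ 2 + z ^ 2 + 7) : False := by
  -- work in ℤ
  have hZ0 := congrArg (Nat.cast : ℕ → ℤ) h
  push_cast at hZ0
  have hZ : (x : ℤ) ^ 2 * z = 2 * x ^ 2 + z ^ 2 + 7 := by linear_combination hZ0
  set k : ℤ := 2 * (z : ℤ) - (x : ℤ) ^ 2 with hk
  have hksq : k ^ 2 = (x : ℤ) ^ 4 - 8 * x ^ 2 - 28 := by
    have : (z : ℤ) ^ 2 = (x : ℤ) ^ 2 * z - 2 * x ^ 2 - 7 := by linarith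
    nlinarith [this]
  have hx6' : (6 : ℤ) ≤ (x : ℤ) := by exact_mod_cast hx6
  have h1 : ((x : ℤ) ^ 2 - 5) ^ 2 < k ^ 2 := by nlinarith
  have h2 : k ^ 2 < ((x : ℤ) ^ 2 - 4) ^ 2 := by nlinarith
  have habs1 : |k| < (x : ℤ) ^ 2 - 4 := by
    apply abs_lt_of_sq_lt_sq h2
    nlinarith
  have habs2 : (x : ℤ) ^ 2 - 5 < |k| := by
    have h5 : (0 : ℤ) ≤ (x : ℤ) ^ 2 - 5 := by nlinarith
    nlinarith [sq_abs k, abs_nonneg k]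
  -- |k| is an integer strictly between consecutive integers
  omega

/-- for positive integers x ≤ y ≤ z with xyz = x² + y² + z² + 7:
if y = z then (x,y,z) = (3,4,4); if x = y then (x,y,z) = (4,4,13);
in particular there is no solution with x = y = z. -/
theorem boundary_solutions (x y z : ℕ) (hx : 0 < x) (hxy : x ≤ y) (hyz : y ≤ z)
    (h : x * y * z = x ^ 2 + y ^ 2 + z ^ 2 + 7) :
    (y = z → x = 3 ∧ y = 4 ∧ z = 4) ∧
    (x = y → x = 4 ∧ y = 4 ∧ z = 13) ∧
    ¬(x = y ∧ y = z) := by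
  have case1 : y = z → x = 3 ∧ y = 4 ∧ z = 4 := by
    intro hyz'
    subst hyz'
    -- x * y * y = x^2 + 2 y^2 + 7
    have hx3 : 3 ≤ x := by
      by_contra hc
      push_neg at hc
      interval_cases x <;> nlinarith
    have hx3' : x = 3 := by
      by_contra hc
      have hx4 : 4 ≤ x := by omega
      nlinarith [mul_le_mul hxy hxy (Nat.zero_le x) (Nat.zero_le y)]
    subst hx3'
    have h16 : y ^ 2 = 16 := by nlinarith
    have hy4 : y = 4 := by nlinarith
    exact ⟨rfl, hy4, hy4⟩
  have case2 : x = y → x = 4 ∧ y = 4 ∧ z = 13 := by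
    intro hxy'
    subst hxy'
    have hzx2 : z < x ^ 2 := by nlinarith
    have hx5 : x ≤ 5 := by
      by_contra hc
      exact aux_xy_bound x z (by omega) hyz h
    have hx1 : 1 ≤ x := hx
    interval_cases x <;> [skip; skip; skip; skip; skip] <;>
      (interval_cases z <;> omega)
  refine ⟨case1, case2, ?_⟩
  rintro ⟨h1, h2⟩
  have := case1 h2
  have := case2 h1
  omega
end

section
/- Every triple of positive integers x ≤ y ≤ z satisfying xyz = x² + y² + z² + 7 has x ≥ 3, y ≥ 4 and z ≥ 4. -/
/-- every positive integer solution x ≤ y ≤ z of xyz = x² + y² + z² + 7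
satisfies x ≥ 3, y ≥ 4, z ≥ 4. -/
theorem solutions_lower_bounds (x y z : ℕ) (hx : 0 < x) (hxy : x ≤ y) (hyz : y ≤ z)
    (h : x * y * z = x ^ 2 + y ^ 2 + z ^ 2 + 7) :
    3 ≤ x ∧ 4 ≤ y ∧ 4 ≤ z := by
  have h' : (x : ℤ) * y * z = (x : ℤ) ^ 2 + (y : ℤ) ^ 2 + (z : ℤ) ^ 2 + 7 := by
    exact_mod_cast h
  have hxy' : (x : ℤ) ≤ y := by exact_mod_cast hxy
  have hyz' : (y : ℤ) ≤ z := by exact_mod_cast hyz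
  have hx' : (1 : ℤ) ≤ x := by exact_mod_cast hx
  have hx3 : 3 ≤ x := by
    by_contra hc
    push_neg at hc
    have : (x : ℤ) ≤ 2 := by exact_mod_cast Nat.lt_succ_iff.mp hc
    nlinarith [sq_nonneg ((y : ℤ) - z), mul_pos (lt_of_lt_of_le (by linarith : (0:ℤ) < y) hyz') (lt_of_lt_of_le hx' hxy')]
  have hy4 : 4 ≤ y := by
    by_contra hc
    push_neg at hc
    have hy3 : y = 3 := le_antisymm (Nat.lt_succ_iff.mp hc) (hx3.trans hxy)
    have hx3' : x = 3 := le_antisymm (hxy.trans_eq hy3) hx3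
    subst hy3; subst hx3'
    have hz' : (3 : ℤ) ≤ z := by exact_mod_cast hyz
    nlinarith [sq_nonneg ((z : ℤ) - 4), sq_nonneg ((z : ℤ) - 5)]
  exact ⟨hx3, hy4, hy4.trans hyz⟩
end

section
/- Let x, y, z be positive integers with x ≤ y < z and xyz = x² + y² + z² + 7. Then xy − z is a positive integer, the triple (x, xy−z, y) again satisfies the equation x·(xy−z)·y = x² + (xy−z)² + y² + 7, and xy − z ≤ y, with equality xy − z = y occurring only when (x,y,z) = (3,4,8). -/
/-- for positive integers x ≤ y < z with xyz = x² + y² + z² + 7, the number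
xy − z is a positive integer, (x, xy−z, y) again solves the equation, and xy − z ≤ y with
equality only for (x,y,z) = (3,4,8). -/
theorem vieta_descent (x y z : ℤ) (hx : 0 < x) (hxy : x ≤ y) (hyz : y < z)
    (h : x * y * z = x ^ 2 + y ^ 2 + z ^ 2 + 7) :
    0 < x * y - z ∧
    x * (x * y - z) * y = x ^ 2 + (x * y - z) ^ 2 + y ^ 2 + 7 ∧
    x * y - z ≤ y ∧
    (x * y - z = y → x = 3 ∧ y = 4 ∧ z = 8) := by
  have hz : 0 < z := lt_trans (lt_of_lt_of_le hx hxy) hyz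
  -- x ≥ 3
  have hx3 : 3 ≤ x := by
    by_contra hc
    push_neg at hc
    interval_cases x
    · nlinarith [sq_nonneg (y - z)]
    · nlinarith [sq_nonneg (y - z)]
  -- key product identity
  have hzz' : z * (x * y - z) = x ^ 2 + y ^ 2 + 7 := by linear_combination h
  have hpos : 0 < x * y - z := by
    rcases mul_pos_iff.mp (show 0 < z * (x * y - z) by nlinarith) with ⟨_, h2⟩ | ⟨h1, _⟩
    · exact h2
    · linarith
  have heq : x * (x * y - z) * y = x ^ 2 + (x * y - z) ^ 2 + y ^ 2 + 7 := by
    linear_combination h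
  have hle : x * y - z ≤ y := by
    by_contra hc
    push_neg at hc
    have h1 : 1 ≤ z - y := by linarith
    have h2 : 1 ≤ (x * y - z) - y := by linarith
    have hf : (z - y) * ((x * y - z) - y) = x ^ 2 + 2 * y ^ 2 + 7 - x * y ^ 2 := by
      linear_combination h
    have hprod : 1 ≤ x ^ 2 + 2 * y ^ 2 + 7 - x * y ^ 2 := by
      rw [← hf]; nlinarith
    have hy2 : y ^ 2 ≤ x ^ 2 + 6 := by nlinarith
    have hyx : y = x := by nlinarith
    have hx4 : x ≤ 3 := by
      by_contra hc2
      push_neg at hc2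
      nlinarith
    have hxe : x = 3 := le_antisymm hx4 hx3
    nlinarith [sq_nonneg (2 * z - 9)]
  refine ⟨hpos, heq, hle, ?_⟩
  intro he
  have hzeq : z = y * (x - 1) := by linarith [he]
  have hkey : y ^ 2 * (x - 2) = x ^ 2 + 7 := by
    rw [hzeq] at h; ring_nf at h ⊢; linarith [h]
  have hy2 : x ^ 2 ≤ y ^ 2 := by nlinarith
  have hx3' : x = 3 := by
    by_contra hc
    have hc4 : 4 ≤ x := by omega
    nlinarith [mul_le_mul_of_nonneg_right hy2 (show (0:ℤ) ≤ x - 2 by omega)]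
  subst hx3'
  have h16 : y ^ 2 = 16 := by linarith
  have hfac : (y - 4) * (y + 4) = 0 := by linear_combination h16
  have hy4 : y = 4 := by
    rcases mul_eq_zero.mp hfac with h' | h' <;> omega
  subst hy4
  refine ⟨rfl, rfl, by omega⟩
end

section
/- Let P = (a,b,c,d,e) be a quintuple of positive rationals, let (C₀,C₁,C₂) = φ(P), set m = C₀C₁C₂ − C₁² − C₂² and t = m − C₀² + 2. Then c² − t·cd + d² + C₀·ce + C₀·de + e² = 0. -/
/-- with (C₀,C₁,C₂) = φ(a,b,c,d,e), m = C₀C₁C₂ − C₁² − C₂² and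
t = m − C₀² + 2, one has c² − t·cd + d² + C₀·ce + C₀·de + e² = 0. -/
theorem quadratic_relation (a b c d e C0 C1 C2 m t : ℚ)
    (ha : 0 < a) (hb : 0 < b) (hc : 0 < c) (hd : 0 < d) (he : 0 < e)
    (hC0 : C0 = (a ^ 2 + b ^ 2 + c * d) / (a * b))
    (hC1 : C1 = (c ^ 2 * d + a ^ 2 * c + b ^ 2 * d + a * b * e) / (b * c * d))
    (hC2 : C2 = (c * d ^ 2 + a ^ 2 * c + b ^ 2 * d + a * b * e) / (a * c * d))
    (hm : m = C0 * C1 * C2 - C1 ^ 2 - C2 ^ 2)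
    (ht : t = m - C0 ^ 2 + 2) :
    c ^ 2 - t * (c * d) + d ^ 2 + C0 * (c * e) + C0 * (d * e) + e ^ 2 = 0 := by
  subst ht hm hC0 hC1 hC2
  have ha' := ha.ne'
  have hb' := hb.ne'
  have hc' := hc.ne'
  have hd' := hd.ne'
  field_simp
  ring
end

section
/- Let P = (a,b,c,d,e) be a quintuple of positive rationals, let (C₀,C₁,C₂) = φ(P) and set m = C₀C₁C₂ − C₁² − C₂². Then m > 0, and the first two coordinates are recovered from the last three by a = (C₂·c + (C₀C₁−C₂)·d + C₁·e)/m and b = ((C₀C₂−C₁)·c + C₁·d + C₂·e)/m. -/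
/-- with (C₀,C₁,C₂) = φ(a,b,c,d,e) and m = C₀C₁C₂ − C₁² − C₂², one has m > 0,
a = (C₂c + (C₀C₁−C₂)d + C₁e)/m and b = ((C₀C₂−C₁)c + C₁d + C₂e)/m. -/
theorem recover_first_coordinates (a b c d e C0 C1 C2 m : ℚ)
    (ha : 0 < a) (hb : 0 < b) (hc : 0 < c) (hd : 0 < d) (he : 0 < e)
    (hC0 : C0 = (a ^ 2 + b ^ 2 + c * d) / (a * b))
    (hC1 : C1 = (c ^ 2 * d + a ^ 2 * c + b ^ 2 * d + a * b * e) / (b * c * d))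
    (hC2 : C2 = (c * d ^ 2 + a ^ 2 * c + b ^ 2 * d + a * b * e) / (a * c * d))
    (hm : m = C0 * C1 * C2 - C1 ^ 2 - C2 ^ 2) :
    0 < m ∧
    a = (C2 * c + (C0 * C1 - C2) * d + C1 * e) / m ∧
    b = ((C0 * C2 - C1) * c + C1 * d + C2 * e) / m := by
  have ha' := ha.ne'
  have hb' := hb.ne'
  have hc' := hc.ne'
  have hd' := hd.ne'
  have hM : m * (a ^ 2 * b ^ 2 * c ^ 2 * d ^ 2) =
      c^4*d^4 + 2*b^2*c^3*d^3 + b^4*c^2*d^2 + a*b*c^2*d^3*e + a*b*c^3*d^2*e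
      + a*b^3*c*d^2*e + a*b^3*c^2*d*e + 2*a^2*c^3*d^3 + a^2*b^2*c*d*e^2
      + a^2*b^2*c*d^3 + a^2*b^2*c^3*d + a^3*b*c*d^2*e + a^3*b*c^2*d*e
      + a^4*c^2*d^2 := by
    subst hm hC0 hC1 hC2
    field_simp
    ring
  have hMpos : 0 < m * (a ^ 2 * b ^ 2 * c ^ 2 * d ^ 2) := by
    rw [hM]; positivity
  have hmpos : 0 < m := by
    by_contra h
    push_neg at h
    have : m * (a ^ 2 * b ^ 2 * c ^ 2 * d ^ 2) ≤ 0 := by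
      apply mul_nonpos_of_nonpos_of_nonneg h
      positivity
    linarith
  have hm' : m ≠ 0 := hmpos.ne'
  refine ⟨hmpos, ?_, ?_⟩
  · rw [eq_div_iff hm']
    subst hm hC0 hC1 hC2
    field_simp
    ring
  · rw [eq_div_iff hm']
    subst hm hC0 hC1 hC2
    field_simp
    ring
end

section
/- Let P = (a,b,c,d,e) be a quintuple of positive rationals, let (C₀,C₁,C₂) = φ(P), set m = C₀C₁C₂ − C₁² − C₂² and t = m − C₀² + 2. Regard P as a row vector in ℚ⁵. Then for every natural number n, the quintuple β^{3n}(P) equals the row vector P·L₁ⁿ and β^{−3n}(P) equals P·L₋₁ⁿ, where L₁ = (1/m)·the 5×5 matrix with rows (0,0,0,0,0), (0,0,0,0,0), (tC₂+C₀C₁−C₂, t(C₀C₂−C₁)+C₁, tm, m, 0), (−C₂, C₁−C₀C₂, −m, 0, 0), (C₁−C₀C₂, C₂+C₀C₁−C₀²C₂, −C₀m, 0, m), and L₋₁ = (1/m)·the 5×5 matrix with rows (0,0,0,0,0), (0,0,0,0,0), (C₂−C₀C₁, −C₁, 0, −m, 0), (t(C₀C₁−C₂)+C₂, tC₁+C₀C₂−C₁,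 m, tm, 0), (C₁+C₀C₂−C₀²C₁, C₂−C₀C₁, 0, −C₀m, m). -/
/-- A quintuple viewed as a row vector in ℚ⁵. -/
def toVec : Q5 → (Fin 5 → ℚ)
  | (a, b, c, d, e) => ![a, b, c, d, e]


set_option maxHeartbeats 4000000

private lemma stepF (C0 C1 C2 m t p q r s u : ℚ)
    (hp : 0 < p) (hq : 0 < q) (hr : 0 < r) (hs : 0 < s) (hu : 0 < u)
    (hC0 : C0 = (p ^ 2 + q ^ 2 + r * s) / (p * q))
    (hC1 : C1 = (r ^ 2 * s + p ^ 2 * r + q ^ 2 * s + p * q * u) / (q * r * s))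
    (hC2 : C2 = (r * s ^ 2 + p ^ 2 * r + q ^ 2 * s + p * q * u) / (p * r * s))
    (hm : m = C0 * C1 * C2 - C1 ^ 2 - C2 ^ 2)
    (ht : t = m - C0 ^ 2 + 2) :
    ∃ p' q' r' s' u' : ℚ,
      actBeta^[3] (p, q, r, s, u) = (p', q', r', s', u') ∧
      0 < p' ∧ 0 < q' ∧ 0 < r' ∧ 0 < s' ∧ 0 < u' ∧
      C0 = (p' ^ 2 + q' ^ 2 + r' * s') / (p' * q') ∧
      C1 = (r' ^ 2 * s' + p' ^ 2 * r' + q' ^ 2 * s' + p' * q' * u') / (q' * r' * s') ∧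
      C2 = (r' * s' ^ 2 + p' ^ 2 * r' + q' ^ 2 * s' + p' * q' * u') / (p' * r' * s') ∧
      toVec (p', q', r', s', u') = Matrix.vecMul (toVec (p, q, r, s, u)) (m⁻¹ •
        !![0, 0, 0, 0, 0;
           0, 0, 0, 0, 0;
           t * C2 + C0 * C1 - C2, t * (C0 * C2 - C1) + C1, t * m, m, 0;
           -C2, C1 - C0 * C2, -m, 0, 0;
           C1 - C0 * C2, C2 + C0 * C1 - C0 ^ 2 * C2, -C0 * m, 0, m]) := by
  have hm' : m = (r^4*s^4 + 2*q^2*r^3*s^3 + q^4*r^2*s^2 + p*q*r^2*s^3*u + p*q*r^3*s^2*u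
      + p*q^3*r*s^2*u + p*q^3*r^2*s*u + 2*p^2*r^3*s^3 + p^2*q^2*r*s*u^2 + p^2*q^2*r*s^3
      + p^2*q^2*r^3*s + p^3*q*r*s^2*u + p^3*q*r^2*s*u + p^4*r^2*s^2) / (p*q*r*s)^2 := by
    rw [hm, hC0, hC1, hC2]; field_simp; ring
  have hB : (0:ℚ) < r^4*s^4 + 2*q^2*r^3*s^3 + q^4*r^2*s^2 + p*q*r^2*s^3*u + p*q*r^3*s^2*u
      + p*q^3*r*s^2*u + p*q^3*r^2*s*u + 2*p^2*r^3*s^3 + p^2*q^2*r*s*u^2 + p^2*q^2*r*s^3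
      + p^2*q^2*r^3*s + p^3*q*r*s^2*u + p^3*q*r^2*s*u + p^4*r^2*s^2 := by positivity
  refine ⟨(p*r+q*u)/s, (q*((p*r+q*u)/s)+r*u)/p,
    (r*((q*((p*r+q*u)/s)+r*u)/p)+((p*r+q*u)/s)*u)/q, r, u, rfl,
    by positivity, by positivity, by positivity, hr, hu, ?_, ?_, ?_, ?_⟩
  · rw [hC0]; field_simp; ring
  · rw [hC1]; field_simp; ring
  · rw [hC2]; field_simp; ring
  · subst ht
    funext j
    fin_cases j <;>
      · simp only [toVec, Matrix.vecMul, dotProduct, Fin.sum_univ_five,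
          Matrix.smul_apply, Matrix.cons_val', Matrix.cons_val_zero, Matrix.cons_val_one,
          Matrix.head_cons, Matrix.head_fin_const, Matrix.empty_val',
          Matrix.cons_val_fin_one, Matrix.cons_val_two, Matrix.cons_val_three,
          Matrix.cons_val_four, Matrix.tail_cons, Matrix.of_apply, smul_eq_mul,
          Matrix.cons_val_succ, Fin.reduceFinMk]
        simp only [hm', hC0, hC1, hC2]
        field_simp [hp.ne', hq.ne', hr.ne', hs.ne', hu.ne', hB.ne']
        try ring

private lemma stepB_s13 (C0 C1 C2 m t p q r s u : ℚ)
    (hp : 0 < p) (hq : 0 < q) (hr : 0 < r) (hs : 0 < s) (hu : 0 < u)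
    (hC0 : C0 = (p ^ 2 + q ^ 2 + r * s) / (p * q))
    (hC1 : C1 = (r ^ 2 * s + p ^ 2 * r + q ^ 2 * s + p * q * u) / (q * r * s))
    (hC2 : C2 = (r * s ^ 2 + p ^ 2 * r + q ^ 2 * s + p * q * u) / (p * r * s))
    (hm : m = C0 * C1 * C2 - C1 ^ 2 - C2 ^ 2)
    (ht : t = m - C0 ^ 2 + 2) :
    ∃ p' q' r' s' u' : ℚ,
      actBetaInv^[3] (p, q, r, s, u) = (p', q', r', s', u') ∧
      0 < p' ∧ 0 < q' ∧ 0 < r' ∧ 0 < s' ∧ 0 < u' ∧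
      C0 = (p' ^ 2 + q' ^ 2 + r' * s') / (p' * q') ∧
      C1 = (r' ^ 2 * s' + p' ^ 2 * r' + q' ^ 2 * s' + p' * q' * u') / (q' * r' * s') ∧
      C2 = (r' * s' ^ 2 + p' ^ 2 * r' + q' ^ 2 * s' + p' * q' * u') / (p' * r' * s') ∧
      toVec (p', q', r', s', u') = Matrix.vecMul (toVec (p, q, r, s, u)) (m⁻¹ •
        !![0, 0, 0, 0, 0;
           0, 0, 0, 0, 0;
           C2 - C0 * C1, -C1, 0, -m, 0;
           t * (C0 * C1 - C2) + C2, t * C1 + C0 * C2 - C1, m, t * m, 0;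
           C1 + C0 * C2 - C0 ^ 2 * C1, C2 - C0 * C1, 0, -C0 * m, m]) := by
  have hm' : m = (r^4*s^4 + 2*q^2*r^3*s^3 + q^4*r^2*s^2 + p*q*r^2*s^3*u + p*q*r^3*s^2*u
      + p*q^3*r*s^2*u + p*q^3*r^2*s*u + 2*p^2*r^3*s^3 + p^2*q^2*r*s*u^2 + p^2*q^2*r*s^3
      + p^2*q^2*r^3*s + p^3*q*r*s^2*u + p^3*q*r^2*s*u + p^4*r^2*s^2) / (p*q*r*s)^2 := by
    rw [hm, hC0, hC1, hC2]; field_simp; ring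
  have hB : (0:ℚ) < r^4*s^4 + 2*q^2*r^3*s^3 + q^4*r^2*s^2 + p*q*r^2*s^3*u + p*q*r^3*s^2*u
      + p*q^3*r*s^2*u + p*q^3*r^2*s*u + 2*p^2*r^3*s^3 + p^2*q^2*r*s*u^2 + p^2*q^2*r*s^3
      + p^2*q^2*r^3*s + p^3*q*r*s^2*u + p^3*q*r^2*s*u + p^4*r^2*s^2 := by positivity
  refine ⟨(s*u+p*((p*u+q*s)/r))/q, (p*u+q*s)/r, s,
    (((p*u+q*s)/r)*u+s*((s*u+p*((p*u+q*s)/r))/q))/p, u, rfl,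
    by positivity, by positivity, hs, by positivity, hu, ?_, ?_, ?_, ?_⟩
  · rw [hC0]; field_simp; ring
  · rw [hC1]; field_simp; ring
  · rw [hC2]; field_simp; ring
  · subst ht
    funext j
    fin_cases j <;>
      · simp only [toVec, Matrix.vecMul, dotProduct, Fin.sum_univ_five,
          Matrix.smul_apply, Matrix.cons_val', Matrix.cons_val_zero, Matrix.cons_val_one,
          Matrix.head_cons, Matrix.head_fin_const, Matrix.empty_val',
          Matrix.cons_val_fin_one, Matrix.cons_val_two, Matrix.cons_val_three,
          Matrix.cons_val_four, Matrix.tail_cons, Matrix.of_apply, smul_eq_mul,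
          Matrix.cons_val_succ, Fin.reduceFinMk]
        simp only [hm', hC0, hC1, hC2]
        field_simp [hp.ne', hq.ne', hr.ne', hs.ne', hu.ne', hB.ne']
        try ring

/-- with (C₀,C₁,C₂) = φ(P), m = C₀C₁C₂ − C₁² − C₂², t = m − C₀² + 2, for every
natural number n we have β^{3n}(P) = P·L₁ⁿ and β^{−3n}(P) = P·L₋₁ⁿ as row vectors. -/
theorem beta_cubed_powers (a b c d e C0 C1 C2 m t : ℚ)
    (ha : 0 < a) (hb : 0 < b) (hc : 0 < c) (hd : 0 < d) (he : 0 < e)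
    (hC0 : C0 = (a ^ 2 + b ^ 2 + c * d) / (a * b))
    (hC1 : C1 = (c ^ 2 * d + a ^ 2 * c + b ^ 2 * d + a * b * e) / (b * c * d))
    (hC2 : C2 = (c * d ^ 2 + a ^ 2 * c + b ^ 2 * d + a * b * e) / (a * c * d))
    (hm : m = C0 * C1 * C2 - C1 ^ 2 - C2 ^ 2)
    (ht : t = m - C0 ^ 2 + 2)
    (L1 Lm1 : Matrix (Fin 5) (Fin 5) ℚ)
    (hL1 : L1 = m⁻¹ •
      !![0, 0, 0, 0, 0;
         0, 0, 0, 0, 0;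
         t * C2 + C0 * C1 - C2, t * (C0 * C2 - C1) + C1, t * m, m, 0;
         -C2, C1 - C0 * C2, -m, 0, 0;
         C1 - C0 * C2, C2 + C0 * C1 - C0 ^ 2 * C2, -C0 * m, 0, m])
    (hLm1 : Lm1 = m⁻¹ •
      !![0, 0, 0, 0, 0;
         0, 0, 0, 0, 0;
         C2 - C0 * C1, -C1, 0, -m, 0;
         t * (C0 * C1 - C2) + C2, t * C1 + C0 * C2 - C1, m, t * m, 0;
         C1 + C0 * C2 - C0 ^ 2 * C1, C2 - C0 * C1, 0, -C0 * m, m]) :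
    ∀ n : ℕ,
      toVec (actBeta^[3 * n] (a, b, c, d, e)) =
        Matrix.vecMul (toVec (a, b, c, d, e)) (L1 ^ n) ∧
      toVec (actBetaInv^[3 * n] (a, b, c, d, e)) =
        Matrix.vecMul (toVec (a, b, c, d, e)) (Lm1 ^ n) := by

  have keyF : ∀ n : ℕ, ∃ p q r s u : ℚ,
      actBeta^[3 * n] (a, b, c, d, e) = (p, q, r, s, u) ∧
      0 < p ∧ 0 < q ∧ 0 < r ∧ 0 < s ∧ 0 < u ∧
      C0 = (p ^ 2 + q ^ 2 + r * s) / (p * q) ∧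
      C1 = (r ^ 2 * s + p ^ 2 * r + q ^ 2 * s + p * q * u) / (q * r * s) ∧
      C2 = (r * s ^ 2 + p ^ 2 * r + q ^ 2 * s + p * q * u) / (p * r * s) ∧
      toVec (p, q, r, s, u) = Matrix.vecMul (toVec (a, b, c, d, e)) (L1 ^ n) := by
    intro n
    induction n with
    | zero =>
      exact ⟨a, b, c, d, e, by simp, ha, hb, hc, hd, he, hC0, hC1, hC2, by
        simp [Matrix.vecMul_one]⟩
    | succ n ih =>
      obtain ⟨p, q, r, s, u, hPn, hp, hq, hr, hs, hu, h0, h1, h2, hv⟩ := ih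
      obtain ⟨p', q', r', s', u', hP3, hp', hq', hr', hs', hu', h0', h1', h2', hv'⟩ :=
        stepF C0 C1 C2 m t p q r s u hp hq hr hs hu h0 h1 h2 hm ht
      refine ⟨p', q', r', s', u', ?_, hp', hq', hr', hs', hu', h0', h1', h2', ?_⟩
      · have h3n : 3 * (n + 1) = 3 + 3 * n := by ring
        rw [h3n, Function.iterate_add_apply, hPn, hP3]
      · rw [hv', hv, ← hL1, Matrix.vecMul_vecMul, ← pow_succ]
  have keyB : ∀ n : ℕ, ∃ p q r s u : ℚ,
      actBetaInv^[3 * n] (a, b, c, d, e) = (p, q, r, s, u) ∧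
      0 < p ∧ 0 < q ∧ 0 < r ∧ 0 < s ∧ 0 < u ∧
      C0 = (p ^ 2 + q ^ 2 + r * s) / (p * q) ∧
      C1 = (r ^ 2 * s + p ^ 2 * r + q ^ 2 * s + p * q * u) / (q * r * s) ∧
      C2 = (r * s ^ 2 + p ^ 2 * r + q ^ 2 * s + p * q * u) / (p * r * s) ∧
      toVec (p, q, r, s, u) = Matrix.vecMul (toVec (a, b, c, d, e)) (Lm1 ^ n) := by
    intro n
    induction n with
    | zero =>
      exact ⟨a, b, c, d, e, by simp, ha, hb, hc, hd, he, hC0, hC1, hC2, by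
        simp [Matrix.vecMul_one]⟩
    | succ n ih =>
      obtain ⟨p, q, r, s, u, hPn, hp, hq, hr, hs, hu, h0, h1, h2, hv⟩ := ih
      obtain ⟨p', q', r', s', u', hP3, hp', hq', hr', hs', hu', h0', h1', h2', hv'⟩ :=
        stepB_s13 C0 C1 C2 m t p q r s u hp hq hr hs hu h0 h1 h2 hm ht
      refine ⟨p', q', r', s', u', ?_, hp', hq', hr', hs', hu', h0', h1', h2', ?_⟩
      · have h3n : 3 * (n + 1) = 3 + 3 * n := by ring
        rw [h3n, Function.iterate_add_apply, hPn, hP3]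
      · rw [hv', hv, ← hLm1, Matrix.vecMul_vecMul, ← pow_succ]
  intro n
  obtain ⟨p, q, r, s, u, hPn, _, _, _, _, _, _, _, _, hv⟩ := keyF n
  obtain ⟨p2, q2, r2, s2, u2, hPn2, _, _, _, _, _, _, _, _, hv2⟩ := keyB n
  rw [hPn, hPn2]
  exact ⟨hv, hv2⟩
end

section
/- Fix a positive integer ε. The set of pairs (u,v) of positive integers satisfying u² − 9uv + v² + 112ε² = 0 with ε dividing both u and v equals the set of pairs (u,v) such that (u,v) = (32ε, 4ε)·Aⁿ for some integer n, where A is the 2×2 integer matrix with rows (9,1) and (−1,0) (which is invertible over ℤ, so integer powers Aⁿ are defined for all n ∈ ℤ). -/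
/-- The matrix A = [[9,1],[−1,0]], invertible over ℤ (with inverse [[0,−1],[1,9]]),
as a unit of the ring of 2×2 integer matrices, so that Aⁿ is defined for all n ∈ ℤ. -/
def matA : (Matrix (Fin 2) (Fin 2) ℤ)ˣ where
  val := !![9, 1; -1, 0]
  inv := !![0, -1; 1, 9]
  val_inv := by
    rw [Matrix.mul_fin_two, Matrix.one_fin_two]; norm_num
  inv_val := by
    rw [Matrix.mul_fin_two, Matrix.one_fin_two]; norm_num

lemma vecMul_apply (v : Fin 2 → ℤ) (M : Matrix (Fin 2) (Fin 2) ℤ) (j : Fin 2) :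
    Matrix.vecMul v M j = v 0 * M 0 j + v 1 * M 1 j := by
  simp [Matrix.vecMul, dotProduct, Fin.sum_univ_two]

lemma mAval : (matA : Matrix (Fin 2) (Fin 2) ℤ) = !![9, 1; -1, 0] := rfl
lemma mBval : ((matA⁻¹ : (Matrix (Fin 2) (Fin 2) ℤ)ˣ) : Matrix (Fin 2) (Fin 2) ℤ) = !![0, -1; 1, 9] := rfl

lemma mA00 : (matA : Matrix (Fin 2) (Fin 2) ℤ) 0 0 = 9 := rfl
lemma mA01 : (matA : Matrix (Fin 2) (Fin 2) ℤ) 0 1 = 1 := rfl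
lemma mA10 : (matA : Matrix (Fin 2) (Fin 2) ℤ) 1 0 = -1 := rfl
lemma mA11 : (matA : Matrix (Fin 2) (Fin 2) ℤ) 1 1 = 0 := rfl
lemma mB00 : ((matA⁻¹ : (Matrix (Fin 2) (Fin 2) ℤ)ˣ) : Matrix (Fin 2) (Fin 2) ℤ) 0 0 = 0 := rfl
lemma mB01 : ((matA⁻¹ : (Matrix (Fin 2) (Fin 2) ℤ)ˣ) : Matrix (Fin 2) (Fin 2) ℤ) 0 1 = -1 := rfl
lemma mB10 : ((matA⁻¹ : (Matrix (Fin 2) (Fin 2) ℤ)ˣ) : Matrix (Fin 2) (Fin 2) ℤ) 1 0 = 1 := rfl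
lemma mB11 : ((matA⁻¹ : (Matrix (Fin 2) (Fin 2) ℤ)ˣ) : Matrix (Fin 2) (Fin 2) ℤ) 1 1 = 9 := rfl

/-- Every point of the orbit of (32,4) under A is a positive solution of the Pell-type
equation x² − 9xy + y² + 112 = 0. -/
lemma orbitA (n : ℤ) :
    0 < Matrix.vecMul ![32, 4] ((matA ^ n : (Matrix (Fin 2) (Fin 2) ℤ)ˣ) : Matrix (Fin 2) (Fin 2) ℤ) 0 ∧
    0 < Matrix.vecMul ![32, 4] ((matA ^ n : (Matrix (Fin 2) (Fin 2) ℤ)ˣ) : Matrix (Fin 2) (Fin 2) ℤ) 1 ∧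
    (Matrix.vecMul ![32, 4] ((matA ^ n : (Matrix (Fin 2) (Fin 2) ℤ)ˣ) : Matrix (Fin 2) (Fin 2) ℤ) 0) ^ 2
      - 9 * (Matrix.vecMul ![32, 4] ((matA ^ n : (Matrix (Fin 2) (Fin 2) ℤ)ˣ) : Matrix (Fin 2) (Fin 2) ℤ) 0)
          * (Matrix.vecMul ![32, 4] ((matA ^ n : (Matrix (Fin 2) (Fin 2) ℤ)ˣ) : Matrix (Fin 2) (Fin 2) ℤ) 1)
      + (Matrix.vecMul ![32, 4] ((matA ^ n : (Matrix (Fin 2) (Fin 2) ℤ)ˣ) : Matrix (Fin 2) (Fin 2) ℤ) 1) ^ 2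
      + 112 = 0 := by
  induction n using Int.induction_on with
  | zero => norm_num [vecMul_apply]
  | succ k ih =>
      obtain ⟨h0, h1, he⟩ := ih
      set q := Matrix.vecMul ![32, 4] ((matA ^ (k:ℤ) : (Matrix (Fin 2) (Fin 2) ℤ)ˣ) : Matrix (Fin 2) (Fin 2) ℤ) with hq
      have hstep : Matrix.vecMul ![32, 4] ((matA ^ ((k:ℤ)+1) : (Matrix (Fin 2) (Fin 2) ℤ)ˣ) : Matrix (Fin 2) (Fin 2) ℤ)
          = Matrix.vecMul q (matA : Matrix (Fin 2) (Fin 2) ℤ) := by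
        rw [zpow_add_one, Units.val_mul, ← Matrix.vecMul_vecMul, hq]
      rw [hstep, vecMul_apply, vecMul_apply]
      simp only [mA00, mA01, mA10, mA11]
      refine ⟨by nlinarith [h0, h1, he], by nlinarith, by linear_combination he⟩
  | pred k ih =>
      obtain ⟨h0, h1, he⟩ := ih
      set q := Matrix.vecMul ![32, 4] ((matA ^ (-(k:ℤ)) : (Matrix (Fin 2) (Fin 2) ℤ)ˣ) : Matrix (Fin 2) (Fin 2) ℤ) with hq
      have hstep : Matrix.vecMul ![32, 4] ((matA ^ (-(k:ℤ)-1) : (Matrix (Fin 2) (Fin 2) ℤ)ˣ) : Matrix (Fin 2) (Fin 2) ℤ)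
          = Matrix.vecMul q ((matA⁻¹ : (Matrix (Fin 2) (Fin 2) ℤ)ˣ) : Matrix (Fin 2) (Fin 2) ℤ) := by
        rw [zpow_sub_one, Units.val_mul, ← Matrix.vecMul_vecMul, hq]
      rw [hstep, vecMul_apply, vecMul_apply]
      simp only [mB00, mB01, mB10, mB11]
      refine ⟨by nlinarith, by nlinarith [h0, h1, he], by linear_combination he⟩

/-- A positive solution of x² − 9xy + y² + 112 = 0 has both coordinates ≥ 4. -/
lemma min4 (x y : ℤ) (hx : 0 < x) (hy : 0 < y)
    (he : x ^ 2 - 9 * x * y + y ^ 2 + 112 = 0) : 4 ≤ x := by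
  by_contra h
  push_neg at h
  interval_cases x
  · nlinarith [sq_nonneg (2 * y - 9)]
  · nlinarith [sq_nonneg (y - 9)]
  · have hub : y ≤ 26 := by nlinarith
    interval_cases y <;> omega

/-- Vieta-jumping descent: every positive solution lies on the orbit of (32,4). -/
lemma descent : ∀ N : ℕ, ∀ x y : ℤ, (x + y).toNat ≤ N → 0 < x → 0 < y →
    x ^ 2 - 9 * x * y + y ^ 2 + 112 = 0 →
    ∃ n : ℤ, ![x, y] = Matrix.vecMul ![32, 4]
      ((matA ^ n : (Matrix (Fin 2) (Fin 2) ℤ)ˣ) : Matrix (Fin 2) (Fin 2) ℤ) := by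
  intro N
  induction N with
  | zero => intro x y hN hx hy he; omega
  | succ N ih =>
      intro x y hN hx hy he
      rcases lt_trichotomy x y with hlt | heq | hgt
      · -- x < y : jump down on the second coordinate
        have h4 : 4 ≤ x := min4 x y hx hy he
        have hy9 : y < 9 * x := by nlinarith
        have hyx : 8 * x ≤ y := by nlinarith [mul_nonneg (sub_nonneg.mpr hlt.le) (sub_nonneg.mpr hlt.le)]
        set y' := 9 * x - y with hy'
        have hy'pos : 0 < y' := by omega
        have he' : y' ^ 2 - 9 * y' * x + x ^ 2 + 112 = 0 := by
          rw [hy']; linear_combination he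
        obtain ⟨n, hn⟩ := ih y' x (by omega) hy'pos hx he'
        refine ⟨n - 1, ?_⟩
        rw [zpow_sub_one, Units.val_mul, ← Matrix.vecMul_vecMul, ← hn, mBval]
        funext i
        fin_cases i <;> simp [vecMul_apply] <;> omega
      · -- x = y : the minimal point (4,4)
        subst heq
        have h14 : 7 * ((x - 4) * (x + 4)) = 0 := by linear_combination -he
        have hx4 : x = 4 := by
          rcases mul_eq_zero.mp (by omega : (x - 4) * (x + 4) = 0) with h | h <;> omega
        subst hx4
        refine ⟨-1, ?_⟩
        rw [zpow_neg_one, mBval]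
        funext i
        fin_cases i <;> simp [vecMul_apply]
      · -- y < x : jump down on the first coordinate
        have h4 : 4 ≤ y := min4 y x hy hx (by linear_combination he)
        have hx9 : x < 9 * y := by nlinarith
        have hxy : 8 * y ≤ x := by nlinarith [mul_nonneg (sub_nonneg.mpr hgt.le) (sub_nonneg.mpr hgt.le)]
        set x' := 9 * y - x with hx'
        have hx'pos : 0 < x' := by omega
        have he' : y ^ 2 - 9 * y * x' + x' ^ 2 + 112 = 0 := by
          rw [hx']; linear_combination he
        obtain ⟨n, hn⟩ := ih y x' (by omega) hy hx'pos he'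
        refine ⟨n + 1, ?_⟩
        rw [zpow_add_one, Units.val_mul, ← Matrix.vecMul_vecMul, ← hn, mAval]
        funext i
        fin_cases i <;> simp [vecMul_apply] <;> omega

/-- the pairs (u,v) of positive integers with u² − 9uv + v² + 112ε² = 0 and
ε ∣ u, ε ∣ v are exactly the pairs (u,v) = (32ε, 4ε)·Aⁿ, n ∈ ℤ. -/
theorem pell_orbit (ε : ℕ) (hε : 0 < ε) :
    {p : ℤ × ℤ | 0 < p.1 ∧ 0 < p.2 ∧
        p.1 ^ 2 - 9 * p.1 * p.2 + p.2 ^ 2 + 112 * (ε : ℤ) ^ 2 = 0 ∧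
        (ε : ℤ) ∣ p.1 ∧ (ε : ℤ) ∣ p.2} =
    {p : ℤ × ℤ | ∃ n : ℤ,
        ![p.1, p.2] = Matrix.vecMul ![32 * (ε : ℤ), 4 * (ε : ℤ)]
          ((matA ^ n : (Matrix (Fin 2) (Fin 2) ℤ)ˣ) : Matrix (Fin 2) (Fin 2) ℤ)} := by
  have hε' : (0:ℤ) < (ε:ℤ) := by exact_mod_cast hε
  have hscale : ∀ (n : ℤ) (j : Fin 2),
      Matrix.vecMul ![32 * (ε : ℤ), 4 * (ε : ℤ)]
        ((matA ^ n : (Matrix (Fin 2) (Fin 2) ℤ)ˣ) : Matrix (Fin 2) (Fin 2) ℤ) j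
      = (ε : ℤ) * Matrix.vecMul ![32, 4]
        ((matA ^ n : (Matrix (Fin 2) (Fin 2) ℤ)ˣ) : Matrix (Fin 2) (Fin 2) ℤ) j := by
    intro n j
    rw [vecMul_apply, vecMul_apply]
    simp only [Matrix.cons_val_zero, Matrix.cons_val_one, Matrix.head_cons]
    ring
  ext p
  simp only [Set.mem_setOf_eq]
  constructor
  · rintro ⟨hu, hv, heq, ⟨c, hc⟩, ⟨d, hd⟩⟩
    have hcpos : 0 < c := by nlinarith
    have hdpos : 0 < d := by nlinarith
    have hsc : (ε:ℤ)^2 * (c ^ 2 - 9 * c * d + d ^ 2 + 112) = 0 := by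
      rw [hc, hd] at heq; linear_combination heq
    have heq' : c ^ 2 - 9 * c * d + d ^ 2 + 112 = 0 := by
      rcases mul_eq_zero.mp hsc with h | h
      · exact absurd h (pow_ne_zero 2 hε'.ne')
      · exact h
    obtain ⟨n, hn⟩ := descent (c + d).toNat c d le_rfl hcpos hdpos heq'
    refine ⟨n, ?_⟩
    funext j
    rw [hscale n j, ← congrFun hn j]
    fin_cases j <;> simp [hc, hd]
  · rintro ⟨n, hn⟩
    obtain ⟨h0, h1, he⟩ := orbitA n
    have hp1 : p.1 = (ε : ℤ) * Matrix.vecMul ![32, 4]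
        ((matA ^ n : (Matrix (Fin 2) (Fin 2) ℤ)ˣ) : Matrix (Fin 2) (Fin 2) ℤ) 0 := by
      have := congrFun hn 0
      rwa [Matrix.cons_val_zero, hscale n 0] at this
    have hp2 : p.2 = (ε : ℤ) * Matrix.vecMul ![32, 4]
        ((matA ^ n : (Matrix (Fin 2) (Fin 2) ℤ)ˣ) : Matrix (Fin 2) (Fin 2) ℤ) 1 := by
      have := congrFun hn 1
      rwa [Matrix.cons_val_one, Matrix.cons_val_zero, hscale n 1] at this
    refine ⟨by rw [hp1]; positivity, by rw [hp2]; positivity, ?_, ⟨_, hp1⟩, ⟨_, hp2⟩⟩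
    rw [hp1, hp2]
    linear_combination (ε:ℤ)^2 * he
end

section
/- Fix a positive integer ε. A quintuple P = (a,b,c,d,ε) of positive integers satisfies φ(P) = (3,4,4) and ε ∣ a, ε ∣ b, ε ∣ c, ε ∣ d if and only if P = β^{3n}(ε,ε,ε,ε,ε) for some integer n. That is, the set S(3,4,4) := φ⁻¹(3,4,4) ∩ {(a,b,c,d,ε) ∈ ℕ₊⁵ : every component divisible by ε} equals the orbit of (ε,ε,ε,ε,ε) under the subgroup ⟨β³⟩. -/
def Xs : ℕ → ℤ
  | 0 => 2
  | 1 => 9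
  | (n+2) => 9 * Xs (n+1) - Xs n
def Ws : ℕ → ℤ
  | 0 => 0
  | 1 => 1
  | (n+2) => 9 * Ws (n+1) - Ws n
def As : ℕ → ℤ
  | 0 => 1
  | 1 => 2
  | (n+2) => 9 * As (n+1) - As n - 4
def Bs : ℕ → ℤ
  | 0 => 1
  | 1 => 3
  | (n+2) => 9 * Bs (n+1) - Bs n - 4
def Cs : ℕ → ℤ
  | 0 => 1
  | 1 => 1
  | (n+2) => 9 * Cs (n+1) - Cs n - 3

lemma stepXW : ∀ n, 2 * Xs (n+1) = 9 * Xs n + 77 * Ws n ∧ 2 * Ws (n+1) = Xs n + 9 * Ws n := by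
  intro n
  induction n with
  | zero => norm_num [Xs, Ws]
  | succ k ih =>
    obtain ⟨h1, h2⟩ := ih
    constructor
    · rw [show k+1+1 = k+2 from rfl, Xs]; linarith
    · rw [show k+1+1 = k+2 from rfl, Ws]; linarith

lemma stepX (n : ℕ) : 2 * Xs (n+1) = 9 * Xs n + 77 * Ws n := (stepXW n).1
lemma stepW (n : ℕ) : 2 * Ws (n+1) = Xs n + 9 * Ws n := (stepXW n).2

lemma pell : ∀ n, Xs n ^ 2 - 77 * Ws n ^ 2 = 4 := by
  intro n
  induction n with
  | zero => norm_num [Xs, Ws]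
  | succ k ih =>
    have h1 := stepX k
    have h2 := stepW k
    have h4 : 4 * (Xs (k+1) ^ 2 - 77 * Ws (k+1) ^ 2) = 16 := by
      linear_combination (2*Xs (k+1) + 9*Xs k + 77*Ws k) * h1 - 77 * (2*Ws (k+1) + Xs k + 9*Ws k) * h2 + 4*ih
    linarith

lemma linkA : ∀ n, 14 * As n = 3 * Xs n + 8 - 7 * Ws n := by
  have key : ∀ n, (14 * As n = 3 * Xs n + 8 - 7 * Ws n) ∧
      (14 * As (n+1) = 3 * Xs (n+1) + 8 - 7 * Ws (n+1)) := by
    intro n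
    induction n with
    | zero => norm_num [As, Xs, Ws]
    | succ k ih =>
      refine ⟨ih.2, ?_⟩
      rw [show k+1+1 = k+2 from rfl, As]
      linarith [ih.1, ih.2, stepX k, stepW k, stepX (k+1), stepW (k+1)]
  exact fun n => (key n).1

lemma linkB : ∀ n, 14 * Bs n = 3 * Xs n + 8 + 7 * Ws n := by
  have key : ∀ n, (14 * Bs n = 3 * Xs n + 8 + 7 * Ws n) ∧
      (14 * Bs (n+1) = 3 * Xs (n+1) + 8 + 7 * Ws (n+1)) := by
    intro n
    induction n with
    | zero => norm_num [Bs, Xs, Ws]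
    | succ k ih =>
      refine ⟨ih.2, ?_⟩
      rw [show k+1+1 = k+2 from rfl, Bs]
      linarith [ih.1, ih.2, stepX k, stepW k, stepX (k+1), stepW (k+1)]
  exact fun n => (key n).1

lemma linkC0 : ∀ n, 7 * Cs n = 2 * Xs n + 3 - 14 * Ws n := by
  have key : ∀ n, (7 * Cs n = 2 * Xs n + 3 - 14 * Ws n) ∧
      (7 * Cs (n+1) = 2 * Xs (n+1) + 3 - 14 * Ws (n+1)) := by
    intro n
    induction n with
    | zero => norm_num [Cs, Xs, Ws]
    | succ k ih =>
      refine ⟨ih.2, ?_⟩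
      rw [show k+1+1 = k+2 from rfl, Cs]
      linarith [ih.1, ih.2, stepX k, stepW k, stepX (k+1), stepW (k+1)]
  exact fun n => (key n).1

lemma linkC1 (n : ℕ) : 7 * Cs (n+1) = 2 * Xs n + 3 + 14 * Ws n := by
  linear_combination linkC0 (n+1) + stepX n - 7 * stepW n

lemma linkA' (n : ℕ) : 28 * As (n+1) = 20 * Xs n + 168 * Ws n + 16 := by
  linear_combination 2 * linkA (n+1) + 3 * stepX n - 7 * stepW n

lemma linkB' (n : ℕ) : 28 * Bs (n+1) = 34 * Xs n + 294 * Ws n + 16 := by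
  linear_combination 2 * linkB (n+1) + 3 * stepX n + 7 * stepW n

lemma linkC2' (n : ℕ) : 14 * Cs (n+2) = 32 * Xs n + 280 * Ws n + 6 := by
  linear_combination 2 * linkC1 (n+1) + 2 * stepX n + 14 * stepW n

lemma posA : ∀ n, 1 ≤ As n ∧ As n ≤ As (n+1) := by
  intro n
  induction n with
  | zero => norm_num [As]
  | succ k ih =>
    refine ⟨le_trans ih.1 ih.2, ?_⟩
    rw [show k+1+1 = k+2 from rfl, As]
    have := ih.1
    have := ih.2
    linarith

lemma posB : ∀ n, 1 ≤ Bs n ∧ Bs n ≤ Bs (n+1) := by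
  intro n
  induction n with
  | zero => norm_num [Bs]
  | succ k ih =>
    refine ⟨le_trans ih.1 ih.2, ?_⟩
    rw [show k+1+1 = k+2 from rfl, Bs]
    have := ih.1
    have := ih.2
    linarith

lemma posC : ∀ n, 1 ≤ Cs n ∧ Cs n ≤ Cs (n+1) := by
  intro n
  induction n with
  | zero => norm_num [Cs]
  | succ k ih =>
    refine ⟨le_trans ih.1 ih.2, ?_⟩
    rw [show k+1+1 = k+2 from rfl, Cs]
    have := ih.1
    have := ih.2
    linarith

lemma eA (n : ℕ) : (As n : ℚ) = (3*(Xs n:ℚ) + 8 - 7*(Ws n:ℚ))/14 := by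
  rw [eq_div_iff (by norm_num : (14:ℚ) ≠ 0)]
  have h : ((14 * As n : ℤ) : ℚ) = ((3 * Xs n + 8 - 7 * Ws n : ℤ) : ℚ) := by
    exact_mod_cast linkA n
  push_cast at h
  linarith

lemma eB (n : ℕ) : (Bs n : ℚ) = (3*(Xs n:ℚ) + 8 + 7*(Ws n:ℚ))/14 := by
  rw [eq_div_iff (by norm_num : (14:ℚ) ≠ 0)]
  have h : ((14 * Bs n : ℤ) : ℚ) = ((3 * Xs n + 8 + 7 * Ws n : ℤ) : ℚ) := by
    exact_mod_cast linkB n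
  push_cast at h
  linarith

lemma eC0 (n : ℕ) : (Cs n : ℚ) = (2*(Xs n:ℚ) + 3 - 14*(Ws n:ℚ))/7 := by
  rw [eq_div_iff (by norm_num : (7:ℚ) ≠ 0)]
  have h : ((7 * Cs n : ℤ) : ℚ) = ((2 * Xs n + 3 - 14 * Ws n : ℤ) : ℚ) := by
    exact_mod_cast linkC0 n
  push_cast at h
  linarith

lemma eC1 (n : ℕ) : (Cs (n+1) : ℚ) = (2*(Xs n:ℚ) + 3 + 14*(Ws n:ℚ))/7 := by
  rw [eq_div_iff (by norm_num : (7:ℚ) ≠ 0)]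
  have h : ((7 * Cs (n+1) : ℤ) : ℚ) = ((2 * Xs n + 3 + 14 * Ws n : ℤ) : ℚ) := by
    exact_mod_cast linkC1 n
  push_cast at h
  linarith

lemma eA1 (n : ℕ) : (As (n+1) : ℚ) = (20*(Xs n:ℚ) + 168*(Ws n:ℚ) + 16)/28 := by
  rw [eq_div_iff (by norm_num : (28:ℚ) ≠ 0)]
  have h : ((28 * As (n+1) : ℤ) : ℚ) = ((20 * Xs n + 168 * Ws n + 16 : ℤ) : ℚ) := by
    exact_mod_cast linkA' n
  push_cast at h
  linarith

lemma eB1 (n : ℕ) : (Bs (n+1) : ℚ) = (34*(Xs n:ℚ) + 294*(Ws n:ℚ) + 16)/28 := by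
  rw [eq_div_iff (by norm_num : (28:ℚ) ≠ 0)]
  have h : ((28 * Bs (n+1) : ℤ) : ℚ) = ((34 * Xs n + 294 * Ws n + 16 : ℤ) : ℚ) := by
    exact_mod_cast linkB' n
  push_cast at h
  linarith

lemma eC2 (n : ℕ) : (Cs (n+2) : ℚ) = (32*(Xs n:ℚ) + 280*(Ws n:ℚ) + 6)/14 := by
  rw [eq_div_iff (by norm_num : (14:ℚ) ≠ 0)]
  have h : ((14 * Cs (n+2) : ℤ) : ℚ) = ((32 * Xs n + 280 * Ws n + 6 : ℤ) : ℚ) := by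
    exact_mod_cast linkC2' n
  push_cast at h
  linarith

lemma pellQ (n : ℕ) : (Xs n:ℚ)^2 - 77*(Ws n:ℚ)^2 = 4 := by exact_mod_cast pell n

lemma seqE1Q (n : ℕ) :
    (As n:ℚ)^2 + (Bs n:ℚ)^2 + (Cs (n+1):ℚ)*(Cs n:ℚ) = 3*(As n:ℚ)*(Bs n:ℚ) := by
  rw [eA n, eB n, eC1 n, eC0 n]
  linear_combination (1/28 : ℚ) * pellQ n

lemma seqE2Q (n : ℕ) :
    (Cs (n+1):ℚ)^2*(Cs n:ℚ) + (As n:ℚ)^2*(Cs (n+1):ℚ) + (Bs n:ℚ)^2*(Cs n:ℚ)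
      + (As n:ℚ)*(Bs n:ℚ) = 4*(Bs n:ℚ)*(Cs (n+1):ℚ)*(Cs n:ℚ) := by
  rw [eA n, eB n, eC1 n, eC0 n]
  linear_combination (-13/196 - (Xs n:ℚ)/49) * pellQ n

lemma seqE3Q (n : ℕ) :
    (Cs (n+1):ℚ)*(Cs n:ℚ)^2 + (As n:ℚ)^2*(Cs (n+1):ℚ) + (Bs n:ℚ)^2*(Cs n:ℚ)
      + (As n:ℚ)*(Bs n:ℚ) = 4*(As n:ℚ)*(Cs (n+1):ℚ)*(Cs n:ℚ) := by
  rw [eA n, eB n, eC1 n, eC0 n]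
  linear_combination (-13/196 - (Xs n:ℚ)/49) * pellQ n

lemma I1Q (n : ℕ) :
    (As (n+1):ℚ) * (Cs n:ℚ) = (As n:ℚ) * (Cs (n+1):ℚ) + (Bs n:ℚ) := by
  rw [eA1 n, eA n, eC1 n, eC0 n, eB n]
  linear_combination (1/7 : ℚ) * pellQ n

lemma I2Q (n : ℕ) :
    (Bs (n+1):ℚ) * (As n:ℚ) = (Bs n:ℚ) * (As (n+1):ℚ) + (Cs (n+1):ℚ) := by
  rw [eB1 n, eA1 n, eA n, eB n, eC1 n]
  linear_combination (3/28 : ℚ) * pellQ n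

lemma I3Q (n : ℕ) :
    (Cs (n+2):ℚ) * (Bs n:ℚ) = (Cs (n+1):ℚ) * (Bs (n+1):ℚ) + (As (n+1):ℚ) := by
  rw [eC2 n, eB1 n, eA1 n, eB n, eC1 n]
  linear_combination (1/7 : ℚ) * pellQ n

lemma pellComplete : ∀ (w : ℕ) (x : ℤ), 0 ≤ x → x^2 - 77*(w:ℤ)^2 = 4 →
    ∃ n, Xs n = x ∧ Ws n = (w:ℤ) := by
  intro w
  induction w using Nat.strong_induction_on with
  | _ w IH =>
    intro x hx hp
    match w, hp with
    | 0, hp =>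
      refine ⟨0, ?_, by norm_num [Ws]⟩
      have h0 : (x - 2) * (x + 2) = 0 := by push_cast at hp; linear_combination hp
      rcases mul_eq_zero.1 h0 with h | h
      · simp [Xs]; linarith
      · exfalso; linarith
    | 1, hp =>
      refine ⟨1, ?_, by norm_num [Ws]⟩
      have h0 : (x - 9) * (x + 9) = 0 := by push_cast at hp; linear_combination hp
      rcases mul_eq_zero.1 h0 with h | h
      · simp [Xs]; linarith
      · exfalso; linarith
    | (m+2), hp =>
      set w : ℤ := ((m:ℤ) + 2) with hw
      have hpz : x^2 - 77*w^2 = 4 := by rw [hw]; push_cast at hp; linarith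
      have hw2 : 2 ≤ w := by omega
      -- x and w have the same parity
      have hpar : (2:ℤ) ∣ (x - w) := by
        have h2 : (x - w) * (x + w) = 2*(38*w^2 + 2) := by linear_combination hpz
        rcases Int.even_or_odd (x - w) with he | ho
        · exact he.two_dvd
        · exfalso
          have hxw : Odd (x + w) := by
            have : x + w = (x - w) + 2*w := by ring
            rw [this]; exact ho.add_even (even_two_mul w)
          have : Odd ((x - w) * (x + w)) := ho.mul hxw
          rw [h2] at this
          exact (Int.not_odd_iff_even.2 ⟨38*w^2+2, by ring⟩) this
      obtain ⟨k, hk⟩ := hpar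
      -- bounds
      have hxw1 : x > 7*w := by nlinarith
      have hxw2 : x < 9*w := by nlinarith
      set x' : ℤ := 9*k - 34*w with hx'
      set w' : ℤ := 4*w - k with hw'
      have hxk : x = w + 2*k := by linarith [hk]
      have h2x' : 2*x' = 9*x - 77*w := by rw [hx']; linarith
      have h2w' : 2*w' = 9*w - x := by rw [hw']; linarith
      have hp' : x'^2 - 77*w'^2 = 4 := by
        have h4 : 4*(x'^2 - 77*w'^2) = 16 := by
          linear_combination (2*x' + 9*x - 77*w) * h2x' - 77 * (2*w' + 9*w - x) * h2w' + 4*hpz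
        linarith
      have hx'pos : 0 ≤ x' := by nlinarith
      have hw'pos : 0 < w' := by linarith
      have hw'lt : w' < w := by linarith
      have hw'nat : ((w'.toNat : ℤ)) = w' := Int.toNat_of_nonneg (le_of_lt hw'pos)
      have hlt : w'.toNat < m + 2 := by omega
      obtain ⟨n, hXn, hWn⟩ := IH w'.toNat hlt x' hx'pos (by rw [hw'nat]; exact hp')
      rw [hw'nat] at hWn
      refine ⟨n+1, ?_, ?_⟩
      · have := stepX n
        rw [hXn, hWn] at this
        linarith
      · have := stepW n
        rw [hXn, hWn] at this
        push_cast
        linarith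

lemma completeAux (a b c d : ℤ) (ha : 0 < a) (hb : 0 < b) (hc : 0 < c) (hd : 0 < d)
    (hab : a ≤ b)
    (hE1 : a^2 + b^2 + c*d = 3*a*b)
    (hE2 : c^2*d + a^2*c + b^2*d + a*b = 4*b*c*d)
    (hE3 : c*d^2 + a^2*c + b^2*d + a*b = 4*a*c*d) :
    ∃ n, a = As n ∧ b = Bs n ∧ c = Cs (n+1) ∧ d = Cs n := by
  -- c - d = 4(b - a)
  have h0 : c * d * (c - d - 4*(b - a)) = 0 := by linear_combination hE2 - hE3
  have hcd : c - d = 4*(b - a) := by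
    rcases mul_eq_zero.1 h0 with h | h
    · exfalso; rcases mul_eq_zero.1 h with h' | h' <;> omega
    · linarith
  obtain ⟨s, hs⟩ : ∃ s, c + d = 2*s := ⟨(c+d)/2, by omega⟩
  have hc2 : c = s + 2*(b-a) := by omega
  have hd2 : d = s - 2*(b-a) := by omega
  have hspos : 0 < s := by omega
  -- s^2 = 3a^2 - 5ab + 3b^2
  have hR1 : s^2 = 3*a^2 - 5*a*b + 3*b^2 := by
    have h4 : 4*s^2 = 4*(3*a^2 - 5*a*b + 3*b^2) := by
      linear_combination (-(c+d+2*s))*hs + (c - d + 4*(b-a))*hcd + 4*hE1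
    linarith
  -- 3s = 2(a+b) - 1
  have hR2 : 3*s = 2*(a+b) - 1 := by
    have h0' : a*b*(2*(a+b) - 3*s - 1) = 0 := by
      linear_combination (s - 2*a - 2*b)*hE1 - hE2 + (c*d + a^2)*hc2 + b^2*hd2
    have : 2*(a+b) - 3*s - 1 = 0 := by
      rcases mul_eq_zero.1 h0' with h | h
      · exfalso; rcases mul_eq_zero.1 h with h' | h' <;> omega
      · exact h
    linarith
  obtain ⟨x, hx⟩ : ∃ x, 7*s - 3 = 2*x := ⟨(7*s-3)/2, by omega⟩
  have hxpos : 0 ≤ x := by omega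
  have hPell : x^2 - 77*(b-a)^2 = 4 := by
    have h4 : 4*x^2 - 308*(b-a)^2 = 16 := by
      linear_combination (-(7*s-3+2*x))*hx + 112*hR1 - (21*s+14*a+14*b+7)*hR2
    linarith
  have hwnat : (((b-a).toNat : ℤ)) = b - a := Int.toNat_of_nonneg (by linarith)
  obtain ⟨n, hXn, hWn⟩ := pellComplete (b-a).toNat x hxpos (by rw [hwnat]; exact hPell)
  rw [hwnat] at hWn
  refine ⟨n, ?_, ?_, ?_, ?_⟩
  · have := linkA n; rw [hXn, hWn] at this; linarith
  · have := linkB n; rw [hXn, hWn] at this; linarith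
  · have := linkC1 n; rw [hXn, hWn] at this; linarith
  · have := linkC0 n; rw [hXn, hWn] at this; linarith

lemma posAQ (n : ℕ) : 0 < (As n : ℚ) := by exact_mod_cast lt_of_lt_of_le one_pos (posA n).1
lemma posBQ (n : ℕ) : 0 < (Bs n : ℚ) := by exact_mod_cast lt_of_lt_of_le one_pos (posB n).1
lemma posCQ (n : ℕ) : 0 < (Cs n : ℚ) := by exact_mod_cast lt_of_lt_of_le one_pos (posC n).1

lemma iterBeta (ε : ℚ) (hε : 0 < ε) (n : ℕ) :
    actBeta^[3*n] (ε,ε,ε,ε,ε)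
      = (ε*(As n:ℚ), ε*(Bs n:ℚ), ε*(Cs (n+1):ℚ), ε*(Cs n:ℚ), ε) := by
  induction n with
  | zero => norm_num [As, Bs, Cs]
  | succ n ih =>
    rw [show 3*(n+1) = 3 + 3*n by ring, Function.iterate_add_apply, ih]
    have hne : ∀ m : ℕ, ε * (Cs m : ℚ) ≠ 0 := fun m => ne_of_gt (mul_pos hε (posCQ m))
    have hneA : ε * (As n : ℚ) ≠ 0 := ne_of_gt (mul_pos hε (posAQ n))
    have hneB : ε * (Bs n : ℚ) ≠ 0 := ne_of_gt (mul_pos hε (posBQ n))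
    have key1 : (ε*(As n:ℚ) * (ε*(Cs (n+1):ℚ)) + ε*(Bs n:ℚ) * ε) / (ε*(Cs n:ℚ))
        = ε*(As (n+1):ℚ) := by
      rw [div_eq_iff (hne n)]; linear_combination (-ε^2) * I1Q n
    have key2 : (ε*(Bs n:ℚ) * (ε*(As (n+1):ℚ)) + ε*(Cs (n+1):ℚ) * ε) / (ε*(As n:ℚ))
        = ε*(Bs (n+1):ℚ) := by
      rw [div_eq_iff hneA]; linear_combination (-ε^2) * I2Q n
    have key3 : (ε*(Cs (n+1):ℚ) * (ε*(Bs (n+1):ℚ)) + ε*(As (n+1):ℚ) * ε) / (ε*(Bs n:ℚ))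
        = ε*(Cs (n+2):ℚ) := by
      rw [div_eq_iff hneB]; linear_combination (-ε^2) * I3Q n
    show actBeta^[3] _ = _
    rw [show (3:ℕ) = 2 + 1 from rfl, Function.iterate_add_apply,
        show (2:ℕ) = 1 + 1 from rfl, Function.iterate_add_apply]
    simp only [Function.iterate_one]
    simp only [actBeta, key1, key2, key3]

lemma iterBetaInv (ε : ℚ) (hε : 0 < ε) (n : ℕ) :
    actBetaInv^[3*n] (ε,ε,ε,ε,ε)
      = (ε*(Bs n:ℚ), ε*(As n:ℚ), ε*(Cs n:ℚ), ε*(Cs (n+1):ℚ), ε) := by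
  induction n with
  | zero => norm_num [As, Bs, Cs]
  | succ n ih =>
    rw [show 3*(n+1) = 3 + 3*n by ring, Function.iterate_add_apply, ih]
    have hne : ∀ m : ℕ, ε * (Cs m : ℚ) ≠ 0 := fun m => ne_of_gt (mul_pos hε (posCQ m))
    have hneA : ε * (As n : ℚ) ≠ 0 := ne_of_gt (mul_pos hε (posAQ n))
    have hneB : ε * (Bs n : ℚ) ≠ 0 := ne_of_gt (mul_pos hε (posBQ n))
    have key1 : (ε*(Bs n:ℚ) * ε + ε*(As n:ℚ) * (ε*(Cs (n+1):ℚ))) / (ε*(Cs n:ℚ))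
        = ε*(As (n+1):ℚ) := by
      rw [div_eq_iff (hne n)]; linear_combination (-ε^2) * I1Q n
    have key2 : (ε*(Cs (n+1):ℚ) * ε + ε*(Bs n:ℚ) * (ε*(As (n+1):ℚ))) / (ε*(As n:ℚ))
        = ε*(Bs (n+1):ℚ) := by
      rw [div_eq_iff hneA]; linear_combination (-ε^2) * I2Q n
    have key3 : (ε*(As (n+1):ℚ) * ε + ε*(Cs (n+1):ℚ) * (ε*(Bs (n+1):ℚ))) / (ε*(Bs n:ℚ))
        = ε*(Cs (n+2):ℚ) := by
      rw [div_eq_iff hneB]; linear_combination (-ε^2) * I3Q n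
    show actBetaInv^[3] _ = _
    rw [show (3:ℕ) = 2 + 1 from rfl, Function.iterate_add_apply,
        show (2:ℕ) = 1 + 1 from rfl, Function.iterate_add_apply]
    simp only [Function.iterate_one]
    simp only [actBetaInv, key1, key2, key3]

/-- a quintuple (a,b,c,d,ε) of positive integers satisfies φ(P) = (3,4,4) with
every component divisible by ε iff P = β^{3n}(ε,ε,ε,ε,ε) for some integer n (an integer power
of β³ being a nonnegative power of β³ or of β⁻³). -/
theorem S344_eq_beta_cubed_orbit (ε : ℕ) (hε : 0 < ε) (a b c d : ℕ)
    (ha : 0 < a) (hb : 0 < b) (hc : 0 < c) (hd : 0 < d) :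
    (phi ((a : ℚ), (b : ℚ), (c : ℚ), (d : ℚ), (ε : ℚ)) = (3, 4, 4) ∧
      ε ∣ a ∧ ε ∣ b ∧ ε ∣ c ∧ ε ∣ d) ↔
    (∃ n : ℕ,
      ((a : ℚ), (b : ℚ), (c : ℚ), (d : ℚ), (ε : ℚ)) =
        actBeta^[3 * n] ((ε : ℚ), (ε : ℚ), (ε : ℚ), (ε : ℚ), (ε : ℚ)) ∨
      ((a : ℚ), (b : ℚ), (c : ℚ), (d : ℚ), (ε : ℚ)) =
        actBetaInv^[3 * n] ((ε : ℚ), (ε : ℚ), (ε : ℚ), (ε : ℚ), (ε : ℚ))) := by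
  have hεQ : (0:ℚ) < (ε:ℚ) := by exact_mod_cast hε
  have hεZ : ((ε:ℤ)) ≠ 0 := by exact_mod_cast hε.ne'
  constructor
  · rintro ⟨hphi, hda, hdb, hdc, hdd⟩
    obtain ⟨a1, rfl⟩ := hda
    obtain ⟨b1, rfl⟩ := hdb
    obtain ⟨c1, rfl⟩ := hdc
    obtain ⟨d1, rfl⟩ := hdd
    have ha1 : 0 < a1 := by by_contra h; push_neg at h; interval_cases a1 <;> simp_all
    have hb1 : 0 < b1 := by by_contra h; push_neg at h; interval_cases b1 <;> simp_all
    have hc1 : 0 < c1 := by by_contra h; push_neg at h; interval_cases c1 <;> simp_all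
    have hd1 : 0 < d1 := by by_contra h; push_neg at h; interval_cases d1 <;> simp_all
    have paQ : (0:ℚ) < ((ε*a1 : ℕ):ℚ) := by exact_mod_cast Nat.mul_pos hε ha1
    have pbQ : (0:ℚ) < ((ε*b1 : ℕ):ℚ) := by exact_mod_cast Nat.mul_pos hε hb1
    have pcQ : (0:ℚ) < ((ε*c1 : ℕ):ℚ) := by exact_mod_cast Nat.mul_pos hε hc1
    have pdQ : (0:ℚ) < ((ε*d1 : ℕ):ℚ) := by exact_mod_cast Nat.mul_pos hε hd1
    simp only [phi, phiC0, phiC1, phiC2, Prod.mk.injEq] at hphi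
    obtain ⟨hp0, hp1, hp2⟩ := hphi
    rw [div_eq_iff (by positivity)] at hp0 hp1 hp2
    have hz0' : ((ε*a1:ℕ):ℤ)^2 + ((ε*b1:ℕ):ℤ)^2 + ((ε*c1:ℕ):ℤ)*((ε*d1:ℕ):ℤ)
        = 3 * (((ε*a1:ℕ):ℤ) * ((ε*b1:ℕ):ℤ)) := by exact_mod_cast hp0
    have hz0 : ((ε:ℤ)*a1)^2 + ((ε:ℤ)*b1)^2 + ((ε:ℤ)*c1)*((ε:ℤ)*d1)
        = 3 * (((ε:ℤ)*a1) * ((ε:ℤ)*b1)) := by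
      push_cast at hz0' ⊢; linear_combination hz0' 
    have hz1 : ((ε:ℤ)*c1)^2*((ε:ℤ)*d1) + ((ε:ℤ)*a1)^2*((ε:ℤ)*c1) + ((ε:ℤ)*b1)^2*((ε:ℤ)*d1)
        + ((ε:ℤ)*a1)*((ε:ℤ)*b1)*(ε:ℤ) = 4 * (((ε:ℤ)*b1) * (((ε:ℤ)*c1) * ((ε:ℤ)*d1))) := by
      have hz1' : ((ε*c1:ℕ):ℤ)^2*((ε*d1:ℕ):ℤ) + ((ε*a1:ℕ):ℤ)^2*((ε*c1:ℕ):ℤ)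
          + ((ε*b1:ℕ):ℤ)^2*((ε*d1:ℕ):ℤ) + ((ε*a1:ℕ):ℤ)*((ε*b1:ℕ):ℤ)*(ε:ℤ)
          = 4 * (((ε*b1:ℕ):ℤ) * ((ε*c1:ℕ):ℤ) * ((ε*d1:ℕ):ℤ)) := by exact_mod_cast hp1
      push_cast at hz1' ⊢; linear_combination hz1' 
    have hz2 : ((ε:ℤ)*c1)*((ε:ℤ)*d1)^2 + ((ε:ℤ)*a1)^2*((ε:ℤ)*c1) + ((ε:ℤ)*b1)^2*((ε:ℤ)*d1)
        + ((ε:ℤ)*a1)*((ε:ℤ)*b1)*(ε:ℤ) = 4 * (((ε:ℤ)*a1) * (((ε:ℤ)*c1) * ((ε:ℤ)*d1))) := by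
      have hz2' : ((ε*c1:ℕ):ℤ)*((ε*d1:ℕ):ℤ)^2 + ((ε*a1:ℕ):ℤ)^2*((ε*c1:ℕ):ℤ)
          + ((ε*b1:ℕ):ℤ)^2*((ε*d1:ℕ):ℤ) + ((ε*a1:ℕ):ℤ)*((ε*b1:ℕ):ℤ)*(ε:ℤ)
          = 4 * (((ε*a1:ℕ):ℤ) * ((ε*c1:ℕ):ℤ) * ((ε*d1:ℕ):ℤ)) := by exact_mod_cast hp2
      push_cast at hz2' ⊢; linear_combination hz2' 
    have hE1 : (a1:ℤ)^2 + (b1:ℤ)^2 + (c1:ℤ)*(d1:ℤ) = 3*(a1:ℤ)*(b1:ℤ) := by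
      have := mul_left_cancel₀ (pow_ne_zero 2 hεZ)
        (show ((ε:ℤ))^2 * ((a1:ℤ)^2 + (b1:ℤ)^2 + (c1:ℤ)*(d1:ℤ))
            = ((ε:ℤ))^2 * (3*(a1:ℤ)*(b1:ℤ)) by linear_combination hz0)
      linarith
    have hE2 : (c1:ℤ)^2*(d1:ℤ) + (a1:ℤ)^2*(c1:ℤ) + (b1:ℤ)^2*(d1:ℤ) + (a1:ℤ)*(b1:ℤ)
        = 4*(b1:ℤ)*(c1:ℤ)*(d1:ℤ) := by
      have := mul_left_cancel₀ (pow_ne_zero 3 hεZ)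
        (show ((ε:ℤ))^3 * ((c1:ℤ)^2*(d1:ℤ) + (a1:ℤ)^2*(c1:ℤ) + (b1:ℤ)^2*(d1:ℤ) + (a1:ℤ)*(b1:ℤ))
            = ((ε:ℤ))^3 * (4*(b1:ℤ)*(c1:ℤ)*(d1:ℤ)) by linear_combination hz1)
      linarith
    have hE3 : (c1:ℤ)*(d1:ℤ)^2 + (a1:ℤ)^2*(c1:ℤ) + (b1:ℤ)^2*(d1:ℤ) + (a1:ℤ)*(b1:ℤ)
        = 4*(a1:ℤ)*(c1:ℤ)*(d1:ℤ) := by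
      have := mul_left_cancel₀ (pow_ne_zero 3 hεZ)
        (show ((ε:ℤ))^3 * ((c1:ℤ)*(d1:ℤ)^2 + (a1:ℤ)^2*(c1:ℤ) + (b1:ℤ)^2*(d1:ℤ) + (a1:ℤ)*(b1:ℤ))
            = ((ε:ℤ))^3 * (4*(a1:ℤ)*(c1:ℤ)*(d1:ℤ)) by linear_combination hz2)
      linarith
    have pa : (0:ℤ) < (a1:ℤ) := by exact_mod_cast ha1
    have pb : (0:ℤ) < (b1:ℤ) := by exact_mod_cast hb1
    have pc : (0:ℤ) < (c1:ℤ) := by exact_mod_cast hc1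
    have pd : (0:ℤ) < (d1:ℤ) := by exact_mod_cast hd1
    rcases le_total a1 b1 with hle | hle
    · obtain ⟨n, hA, hB, hC, hD⟩ := completeAux (a1:ℤ) (b1:ℤ) (c1:ℤ) (d1:ℤ)
        pa pb pc pd (by exact_mod_cast hle) hE1 hE2 hE3
      refine ⟨n, Or.inl ?_⟩
      rw [iterBeta (ε:ℚ) hεQ n]
      have e1 : ((ε*a1 : ℕ):ℚ) = (ε:ℚ) * ((As n : ℤ):ℚ) := by
        rw [← hA]; push_cast; ring
      have e2 : ((ε*b1 : ℕ):ℚ) = (ε:ℚ) * ((Bs n : ℤ):ℚ) := by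
        rw [← hB]; push_cast; ring
      have e3 : ((ε*c1 : ℕ):ℚ) = (ε:ℚ) * ((Cs (n+1) : ℤ):ℚ) := by
        rw [← hC]; push_cast; ring
      have e4 : ((ε*d1 : ℕ):ℚ) = (ε:ℚ) * ((Cs n : ℤ):ℚ) := by
        rw [← hD]; push_cast; ring
      rw [e1, e2, e3, e4]
    · obtain ⟨n, hA, hB, hC, hD⟩ := completeAux (b1:ℤ) (a1:ℤ) (d1:ℤ) (c1:ℤ)
        pb pa pd pc (by exact_mod_cast hle)
        (by linear_combination hE1) (by linear_combination hE3) (by linear_combination hE2)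
      refine ⟨n, Or.inr ?_⟩
      rw [iterBetaInv (ε:ℚ) hεQ n]
      have e1 : ((ε*a1 : ℕ):ℚ) = (ε:ℚ) * ((Bs n : ℤ):ℚ) := by
        rw [← hB]; push_cast; ring
      have e2 : ((ε*b1 : ℕ):ℚ) = (ε:ℚ) * ((As n : ℤ):ℚ) := by
        rw [← hA]; push_cast; ring
      have e3 : ((ε*c1 : ℕ):ℚ) = (ε:ℚ) * ((Cs n : ℤ):ℚ) := by
        rw [← hD]; push_cast; ring
      have e4 : ((ε*d1 : ℕ):ℚ) = (ε:ℚ) * ((Cs (n+1) : ℤ):ℚ) := by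
        rw [← hC]; push_cast; ring
      rw [e1, e2, e3, e4]
  · rintro ⟨n, h | h⟩
    · rw [iterBeta (ε:ℚ) hεQ n] at h
      rw [Prod.mk.injEq, Prod.mk.injEq, Prod.mk.injEq, Prod.mk.injEq] at h
      obtain ⟨h1, h2, h3, h4, -⟩ := h
      have hZ1 : (a:ℤ) = (ε:ℤ) * As n := by exact_mod_cast h1
      have hZ2 : (b:ℤ) = (ε:ℤ) * Bs n := by exact_mod_cast h2
      have hZ3 : (c:ℤ) = (ε:ℤ) * Cs (n+1) := by exact_mod_cast h3
      have hZ4 : (d:ℤ) = (ε:ℤ) * Cs n := by exact_mod_cast h4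
      refine ⟨?_, ?_, ?_, ?_, ?_⟩
      · simp only [phi, phiC0, phiC1, phiC2, Prod.mk.injEq]
        have pA := posAQ n; have pB := posBQ n
        have pC0 := posCQ n; have pC1 := posCQ (n+1)
        refine ⟨?_, ?_, ?_⟩
        · rw [h1, h2, h3, h4, div_eq_iff (by positivity)]
          linear_combination (ε:ℚ)^2 * seqE1Q n
        · rw [h1, h2, h3, h4, div_eq_iff (by positivity)]
          linear_combination (ε:ℚ)^3 * seqE2Q n
        · rw [h1, h2, h3, h4, div_eq_iff (by positivity)]
          linear_combination (ε:ℚ)^3 * seqE3Q n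
      · exact Int.natCast_dvd_natCast.mp ⟨As n, hZ1⟩
      · exact Int.natCast_dvd_natCast.mp ⟨Bs n, hZ2⟩
      · exact Int.natCast_dvd_natCast.mp ⟨Cs (n+1), hZ3⟩
      · exact Int.natCast_dvd_natCast.mp ⟨Cs n, hZ4⟩
    · rw [iterBetaInv (ε:ℚ) hεQ n] at h
      rw [Prod.mk.injEq, Prod.mk.injEq, Prod.mk.injEq, Prod.mk.injEq] at h
      obtain ⟨h1, h2, h3, h4, -⟩ := h
      have hZ1 : (a:ℤ) = (ε:ℤ) * Bs n := by exact_mod_cast h1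
      have hZ2 : (b:ℤ) = (ε:ℤ) * As n := by exact_mod_cast h2
      have hZ3 : (c:ℤ) = (ε:ℤ) * Cs n := by exact_mod_cast h3
      have hZ4 : (d:ℤ) = (ε:ℤ) * Cs (n+1) := by exact_mod_cast h4
      refine ⟨?_, ?_, ?_, ?_, ?_⟩
      · simp only [phi, phiC0, phiC1, phiC2, Prod.mk.injEq]
        have pA := posAQ n; have pB := posBQ n
        have pC0 := posCQ n; have pC1 := posCQ (n+1)
        refine ⟨?_, ?_, ?_⟩
        · rw [h1, h2, h3, h4, div_eq_iff (by positivity)]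
          linear_combination (ε:ℚ)^2 * seqE1Q n
        · rw [h1, h2, h3, h4, div_eq_iff (by positivity)]
          linear_combination (ε:ℚ)^3 * seqE3Q n
        · rw [h1, h2, h3, h4, div_eq_iff (by positivity)]
          linear_combination (ε:ℚ)^3 * seqE2Q n
      · exact Int.natCast_dvd_natCast.mp ⟨Bs n, hZ1⟩
      · exact Int.natCast_dvd_natCast.mp ⟨As n, hZ2⟩
      · exact Int.natCast_dvd_natCast.mp ⟨Cs n, hZ3⟩
      · exact Int.natCast_dvd_natCast.mp ⟨Cs (n+1), hZ4⟩
end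

section
/- Fix a positive integer ε. Let P = (a,b,c,d,ε) be a quintuple of positive integers such that all three components of φ(P) are positive integers and ε divides a, b, c, d. Then for every element g of the group G (i.e., every finite composition of α, β, α⁻¹, β⁻¹), all five components of g(P) are positive integers divisible by ε, and all three components of φ(g(P)) are positive integers. -/
/-- `q` is a positive integer. -/
def IsPosInt (q : ℚ) : Prop := ∃ k : ℕ, 0 < k ∧ q = (k : ℚ)

/-! ### Auxiliary lemmas -/

section Aux

lemma isPosMultOf_pos {ε : ℕ} (hε : 0 < ε) {q : ℚ} (h : IsPosMultOf ε q) : 0 < q := by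
  obtain ⟨k, hk, rfl⟩ := h
  have : 0 < ε * k := Nat.mul_pos hε hk
  exact_mod_cast this

lemma isPosMultOf_int {ε : ℕ} {q : ℚ} (h : IsPosMultOf ε q) :
    ∃ x : ℤ, q = (ε : ℚ) * (x : ℚ) := by
  obtain ⟨k, _, rfl⟩ := h
  exact ⟨k, by push_cast; ring⟩

lemma isPosMultOf_mk {ε : ℕ} (hε : 0 < ε) {q : ℚ} (hq : 0 < q) {x : ℤ}
    (h : q = (ε : ℚ) * (x : ℚ)) : IsPosMultOf ε q := by
  have hε' : (0 : ℚ) < (ε : ℚ) := by exact_mod_cast hε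
  have hx : 0 < x := by
    by_contra hx
    push_neg at hx
    have : (x : ℚ) ≤ 0 := by exact_mod_cast hx
    nlinarith
  refine ⟨x.toNat, by omega, ?_⟩
  have hxx : ((x.toNat : ℤ) : ℚ) = (x : ℚ) := by
    rw [Int.toNat_of_nonneg hx.le]
  rw [h]
  have hxx' : ((x.toNat : ℕ) : ℚ) = (x : ℚ) := by exact_mod_cast Int.toNat_of_nonneg hx.le
  push_cast
  rw [hxx']

lemma isPosInt_pos {q : ℚ} (h : IsPosInt q) : 0 < q := by
  obtain ⟨k, hk, rfl⟩ := h
  exact_mod_cast hk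

lemma isPosInt_int {q : ℚ} (h : IsPosInt q) : ∃ x : ℤ, q = (x : ℚ) := by
  obtain ⟨k, _, rfl⟩ := h
  exact ⟨k, by push_cast; ring⟩

lemma isPosInt_mk {q : ℚ} (hq : 0 < q) {x : ℤ} (h : q = (x : ℚ)) : IsPosInt q := by
  have hx : 0 < x := by
    have : (0:ℚ) < (x:ℚ) := h ▸ hq
    exact_mod_cast this
  refine ⟨x.toNat, by omega, ?_⟩
  rw [h]
  congr 1
  exact (Int.toNat_of_nonneg hx.le).symm

/-- The invariant preserved by the group action. -/
def GInv (ε : ℕ) (P : Q5) : Prop :=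
  IsPosMultOf ε P.1 ∧ IsPosMultOf ε P.2.1 ∧ IsPosMultOf ε P.2.2.1 ∧
  IsPosMultOf ε P.2.2.2.1 ∧ IsPosMultOf ε P.2.2.2.2 ∧
  IsPosInt (phiC0 P) ∧ IsPosInt (phiC1 P) ∧ IsPosInt (phiC2 P)

lemma inv_step (ε : ℕ) (hε : 0 < ε) (g : Gen) (P : Q5) (h : GInv ε P) :
    GInv ε (g.app P) := by
  obtain ⟨a, b, c, d, e⟩ := P
  obtain ⟨hA, hB, hC, hD, hE, h0, h1, h2⟩ := h
  have ha : 0 < a := isPosMultOf_pos hε hA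
  have hb : 0 < b := isPosMultOf_pos hε hB
  have hc : 0 < c := isPosMultOf_pos hε hC
  have hd : 0 < d := isPosMultOf_pos hε hD
  have he : 0 < e := isPosMultOf_pos hε hE
  obtain ⟨xa, hxa⟩ := isPosMultOf_int hA
  obtain ⟨xb, hxb⟩ := isPosMultOf_int hB
  obtain ⟨xc, hxc⟩ := isPosMultOf_int hC
  obtain ⟨xd, hxd⟩ := isPosMultOf_int hD
  replace hxa : a = (ε : ℚ) * (xa : ℚ) := hxa
  replace hxb : b = (ε : ℚ) * (xb : ℚ) := hxb
  replace hxc : c = (ε : ℚ) * (xc : ℚ) := hxc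
  replace hxd : d = (ε : ℚ) * (xd : ℚ) := hxd
  obtain ⟨n0, hn0⟩ := isPosInt_int h0
  obtain ⟨n1, hn1⟩ := isPosInt_int h1
  obtain ⟨n2, hn2⟩ := isPosInt_int h2
  -- polynomial forms of the integrality hypotheses
  have hp0 : a ^ 2 + b ^ 2 + c * d = (n0 : ℚ) * (a * b) := by
    have := hn0
    simp only [phiC0] at this
    rw [div_eq_iff (by positivity)] at this
    linarith
  have hp1 : c ^ 2 * d + a ^ 2 * c + b ^ 2 * d + a * b * e = (n1 : ℚ) * (b * c * d) := by
    have := hn1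
    simp only [phiC1] at this
    rw [div_eq_iff (by positivity)] at this
    linarith
  have hp2 : c * d ^ 2 + a ^ 2 * c + b ^ 2 * d + a * b * e = (n2 : ℚ) * (a * c * d) := by
    have := hn2
    simp only [phiC2] at this
    rw [div_eq_iff (by positivity)] at this
    linarith
  cases g with
  | A =>
    show GInv ε (actAlpha (a, b, c, d, e))
    have hBpos : 0 < (b ^ 2 + c * d) / a := by positivity
    have hBlin : (b ^ 2 + c * d) / a = (n0 : ℚ) * b - a := by
      rw [div_eq_iff ha.ne']
      linear_combination hp0
    have hBmul : IsPosMultOf ε ((b ^ 2 + c * d) / a) := by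
      refine isPosMultOf_mk hε hBpos (x := n0 * xb - xa) ?_
      rw [hBlin, hxa, hxb]
      push_cast
      ring
    have e0 : phiC0 (actAlpha (a, b, c, d, e)) = phiC0 (a, b, c, d, e) := by
      simp only [actAlpha, phiC0]
      rw [div_eq_div_iff (by positivity) (by positivity)]
      field_simp
      ring
    have e1 : phiC1 (actAlpha (a, b, c, d, e)) = phiC2 (a, b, c, d, e) := by
      simp only [actAlpha, phiC1, phiC2]
      rw [div_eq_div_iff (by positivity) (by positivity)]
      field_simp
      ring
    have e2 : phiC2 (actAlpha (a, b, c, d, e)) =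
        phiC0 (a, b, c, d, e) * phiC2 (a, b, c, d, e) - phiC1 (a, b, c, d, e) := by
      simp only [actAlpha, phiC0, phiC1, phiC2]
      field_simp
      ring
    have e2pos : 0 < phiC2 (actAlpha (a, b, c, d, e)) := by
      simp only [actAlpha, phiC2]
      positivity
    refine ⟨hB, hBmul, hC, hD, hE, ?_, ?_, ?_⟩
    · rw [e0]; exact h0
    · rw [e1]; exact h2
    · refine isPosInt_mk e2pos (x := n0 * n2 - n1) ?_
      rw [e2, hn0, hn1, hn2]
      push_cast
      ring
  | Ainv =>
    show GInv ε (actAlphaInv (a, b, c, d, e))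
    have hApos : 0 < (a ^ 2 + c * d) / b := by positivity
    have hAlin : (a ^ 2 + c * d) / b = (n0 : ℚ) * a - b := by
      rw [div_eq_iff hb.ne']
      linear_combination hp0
    have hAmul : IsPosMultOf ε ((a ^ 2 + c * d) / b) := by
      refine isPosMultOf_mk hε hApos (x := n0 * xa - xb) ?_
      rw [hAlin, hxa, hxb]
      push_cast
      ring
    have e0 : phiC0 (actAlphaInv (a, b, c, d, e)) = phiC0 (a, b, c, d, e) := by
      simp only [actAlphaInv, phiC0]
      rw [div_eq_div_iff (by positivity) (by positivity)]
      field_simp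
      ring
    have e2 : phiC2 (actAlphaInv (a, b, c, d, e)) = phiC1 (a, b, c, d, e) := by
      simp only [actAlphaInv, phiC1, phiC2]
      rw [div_eq_div_iff (by positivity) (by positivity)]
      field_simp
      ring
    have e1 : phiC1 (actAlphaInv (a, b, c, d, e)) =
        phiC0 (a, b, c, d, e) * phiC1 (a, b, c, d, e) - phiC2 (a, b, c, d, e) := by
      simp only [actAlphaInv, phiC0, phiC1, phiC2]
      field_simp
      ring
    have e1pos : 0 < phiC1 (actAlphaInv (a, b, c, d, e)) := by
      simp only [actAlphaInv, phiC1]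
      positivity
    refine ⟨hAmul, hA, hC, hD, hE, ?_, ?_, ?_⟩
    · rw [e0]; exact h0
    · refine isPosInt_mk e1pos (x := n0 * n1 - n2) ?_
      rw [e1, hn0, hn1, hn2]
      push_cast
      ring
    · rw [e2]; exact h1
  | B =>
    show GInv ε (actBeta (a, b, c, d, e))
    have hCpos : 0 < (a * c + b * e) / d := by positivity
    have hClin : (a * c + b * e) / d = a - (n0 : ℚ) * b + (n2 : ℚ) * c := by
      rw [div_eq_iff hd.ne']
      have key : a * (a * c + b * e) = a * ((a - (n0 : ℚ) * b + (n2 : ℚ) * c) * d) := by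
        linear_combination hp2 - d * hp0
      exact mul_left_cancel₀ ha.ne' key
    have hCmul : IsPosMultOf ε ((a * c + b * e) / d) := by
      refine isPosMultOf_mk hε hCpos (x := xa - n0 * xb + n2 * xc) ?_
      rw [hClin, hxa, hxb, hxc]
      push_cast
      ring
    have e0 : phiC0 (actBeta (a, b, c, d, e)) = phiC1 (a, b, c, d, e) := by
      simp only [actBeta, phiC0, phiC1]
      rw [div_eq_div_iff (by positivity) (by positivity)]
      field_simp
      ring
    have e1 : phiC1 (actBeta (a, b, c, d, e)) = phiC2 (a, b, c, d, e) := by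
      simp only [actBeta, phiC1, phiC2]
      rw [div_eq_div_iff (by positivity) (by positivity)]
      field_simp
      ring
    have e2 : phiC2 (actBeta (a, b, c, d, e)) = phiC0 (a, b, c, d, e) := by
      simp only [actBeta, phiC0, phiC2]
      rw [div_eq_div_iff (by positivity) (by positivity)]
      field_simp
      ring
    exact ⟨hB, hC, hCmul, hA, hE, (by rw [e0]; exact h1), (by rw [e1]; exact h2),
      (by rw [e2]; exact h0)⟩
  | Binv =>
    show GInv ε (actBetaInv (a, b, c, d, e))
    have hDpos : 0 < (a * e + b * d) / c := by positivity
    have hDlin : (a * e + b * d) / c = b - (n0 : ℚ) * a + (n1 : ℚ) * d := by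
      rw [div_eq_iff hc.ne']
      have key : b * (a * e + b * d) = b * ((b - (n0 : ℚ) * a + (n1 : ℚ) * d) * c) := by
        linear_combination hp1 - c * hp0
      exact mul_left_cancel₀ hb.ne' key
    have hDmul : IsPosMultOf ε ((a * e + b * d) / c) := by
      refine isPosMultOf_mk hε hDpos (x := xb - n0 * xa + n1 * xd) ?_
      rw [hDlin, hxa, hxb, hxd]
      push_cast
      ring
    have e0 : phiC0 (actBetaInv (a, b, c, d, e)) = phiC2 (a, b, c, d, e) := by
      simp only [actBetaInv, phiC0, phiC2]
      rw [div_eq_div_iff (by positivity) (by positivity)]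
      field_simp
      ring
    have e1 : phiC1 (actBetaInv (a, b, c, d, e)) = phiC0 (a, b, c, d, e) := by
      simp only [actBetaInv, phiC0, phiC1]
      rw [div_eq_div_iff (by positivity) (by positivity)]
      field_simp
      ring
    have e2 : phiC2 (actBetaInv (a, b, c, d, e)) = phiC1 (a, b, c, d, e) := by
      simp only [actBetaInv, phiC1, phiC2]
      rw [div_eq_div_iff (by positivity) (by positivity)]
      field_simp
      ring
    exact ⟨hD, hA, hB, hDmul, hE, (by rw [e0]; exact h2), (by rw [e1]; exact h0),
      (by rw [e2]; exact h1)⟩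

lemma inv_applyWord (ε : ℕ) (hε : 0 < ε) (w : List Gen) :
    ∀ P : Q5, GInv ε P → GInv ε (applyWord w P) := by
  induction w with
  | nil => intro P h; exact h
  | cons g t ih =>
    intro P h
    have : applyWord (g :: t) P = applyWord t (g.app P) := rfl
    rw [this]
    exact ih _ (inv_step ε hε g P h)

end Aux

/-- if P = (a,b,c,d,ε) is a quintuple of positive integers with φ(P) ∈ ℕ₊³ and
ε ∣ a,b,c,d, then for every g ∈ G all five components of g(P) are positive integers divisible
by ε and all three components of φ(g(P)) are positive integers. -/
theorem orbit_preserves_integrality (ε : ℕ) (hε : 0 < ε) (a b c d : ℕ)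
    (ha : 0 < a) (hb : 0 < b) (hc : 0 < c) (hd : 0 < d)
    (hda : ε ∣ a) (hdb : ε ∣ b) (hdc : ε ∣ c) (hdd : ε ∣ d)
    (hphi0 : IsPosInt (phiC0 ((a : ℚ), (b : ℚ), (c : ℚ), (d : ℚ), (ε : ℚ))))
    (hphi1 : IsPosInt (phiC1 ((a : ℚ), (b : ℚ), (c : ℚ), (d : ℚ), (ε : ℚ))))
    (hphi2 : IsPosInt (phiC2 ((a : ℚ), (b : ℚ), (c : ℚ), (d : ℚ), (ε : ℚ))))
    (w : List Gen) :
    (IsPosMultOf ε (applyWord w ((a : ℚ), (b : ℚ), (c : ℚ), (d : ℚ), (ε : ℚ))).1 ∧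
     IsPosMultOf ε (applyWord w ((a : ℚ), (b : ℚ), (c : ℚ), (d : ℚ), (ε : ℚ))).2.1 ∧
     IsPosMultOf ε (applyWord w ((a : ℚ), (b : ℚ), (c : ℚ), (d : ℚ), (ε : ℚ))).2.2.1 ∧
     IsPosMultOf ε (applyWord w ((a : ℚ), (b : ℚ), (c : ℚ), (d : ℚ), (ε : ℚ))).2.2.2.1 ∧
     IsPosMultOf ε (applyWord w ((a : ℚ), (b : ℚ), (c : ℚ), (d : ℚ), (ε : ℚ))).2.2.2.2) ∧
    (IsPosInt (phiC0 (applyWord w ((a : ℚ), (b : ℚ), (c : ℚ), (d : ℚ), (ε : ℚ)))) ∧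
     IsPosInt (phiC1 (applyWord w ((a : ℚ), (b : ℚ), (c : ℚ), (d : ℚ), (ε : ℚ)))) ∧
     IsPosInt (phiC2 (applyWord w ((a : ℚ), (b : ℚ), (c : ℚ), (d : ℚ), (ε : ℚ))))) := by
  have hstart : GInv ε ((a : ℚ), (b : ℚ), (c : ℚ), (d : ℚ), (ε : ℚ)) := by
    obtain ⟨ka, hka⟩ := hda
    obtain ⟨kb, hkb⟩ := hdb
    obtain ⟨kc, hkc⟩ := hdc
    obtain ⟨kd, hkd⟩ := hdd
    have ma : IsPosMultOf ε (a : ℚ) := ⟨ka, Nat.pos_of_ne_zero (by rintro rfl; omega), by exact_mod_cast hka⟩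
    have mb : IsPosMultOf ε (b : ℚ) := ⟨kb, Nat.pos_of_ne_zero (by rintro rfl; omega), by exact_mod_cast hkb⟩
    have mc : IsPosMultOf ε (c : ℚ) := ⟨kc, Nat.pos_of_ne_zero (by rintro rfl; omega), by exact_mod_cast hkc⟩
    have md : IsPosMultOf ε (d : ℚ) := ⟨kd, Nat.pos_of_ne_zero (by rintro rfl; omega), by exact_mod_cast hkd⟩
    have me : IsPosMultOf ε (ε : ℚ) := ⟨1, one_pos, by norm_num⟩
    exact ⟨ma, mb, mc, md, me, hphi0, hphi1, hphi2⟩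
  obtain ⟨j1, j2, j3, j4, j5, j6, j7, j8⟩ := inv_applyWord ε hε w _ hstart
  exact ⟨⟨j1, j2, j3, j4, j5⟩, j6, j7, j8⟩
end
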